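/- arXiv:2010.08293 — 4 statements merged into one kernel-verified Lean document; each statement's English description precedes it below -/
import Mathlib

section
/- Fix p ≥ 1 and a positive integer n with 1 ≤ n ≤ p, and let X be an L^p random variable with n-th cumulant κ_n(X) = (−i)^n (d^n/dz^n) log E[e^{izX}] at z = 0. Then the map L^p ∋ X ↦ κ_n(X) ∈ ℝ is continuous with respect to the L^p norm; more precisely, κ_n(X) is a fixed polynomial function of the moments E[X^m], m ≤ n, and each map L^n ∋ X ↦ E[X^m] ∈ ℝ for m ≤ n is continuous. -/
open MeasureTheory Finset
open scoped ENNReal NNReal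

/-- The `n`-th cumulant `κ_n = (−i)^n (d^n/dz^n) log E[e^{izX}]` at `z = 0`. -/
noncomputable def cumulant {Ω : Type*} [MeasurableSpace Ω] (μ : Measure Ω) (X : Ω → ℝ)
    (n : ℕ) : ℂ :=
  (-Complex.I) ^ n *
    iteratedDeriv n (fun z : ℝ => Complex.log (∫ ω, Complex.exp (Complex.I * z * X ω) ∂μ)) 0

private lemma iteratedDerivWithin_eq_iteratedDeriv_of_isOpen {s : Set ℝ} (hs : IsOpen s)
    {x : ℝ} (hx : x ∈ s) (j : ℕ) (f : ℝ → ℂ) :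
    iteratedDerivWithin j f s x = iteratedDeriv j f x := by
  rw [iteratedDerivWithin, iteratedDeriv, iteratedFDerivWithin_of_isOpen j hs hx]

private lemma iteratedDeriv_add_of_isOpen {s : Set ℝ} (hs : IsOpen s) {x : ℝ} (hx : x ∈ s)
    {j : ℕ} {f g : ℝ → ℂ} (hf : ContDiffOn ℝ j f s) (hg : ContDiffOn ℝ j g s) :
    iteratedDeriv j (fun y => f y + g y) x = iteratedDeriv j f x + iteratedDeriv j g x := by
  have h1 := iteratedDerivWithin_add hx hs.uniqueDiffOn (hf x hx) (hg x hx)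
  rwa [iteratedDerivWithin_eq_iteratedDeriv_of_isOpen hs hx,
    iteratedDerivWithin_eq_iteratedDeriv_of_isOpen hs hx,
    iteratedDerivWithin_eq_iteratedDeriv_of_isOpen hs hx] at h1

private lemma binom_aux (j : ℕ) (a b : ℕ → ℂ) :
    ∑ k ∈ range (j + 1), (j.choose k : ℂ) * a (k + 1) * b (j - k) +
      ∑ k ∈ range (j + 1), (j.choose k : ℂ) * a k * b (j - k + 1) =
    ∑ k ∈ range (j + 2), ((j + 1).choose k : ℂ) * a k * b (j + 1 - k) := by
  rw [Finset.sum_range_succ' (fun k => ((j + 1).choose k : ℂ) * a k * b (j + 1 - k)) (j + 1)]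
  simp only [Nat.succ_sub_succ, Nat.choose_succ_succ, Nat.cast_add, add_mul,
    Finset.sum_add_distrib, Nat.choose_zero_right, Nat.cast_one, one_mul, Nat.sub_zero]
  have h2 : ∑ k ∈ range (j + 1), (j.choose (k + 1) : ℂ) * a (k + 1) * b (j - k) =
      ∑ k ∈ range j, (j.choose (k + 1) : ℂ) * a (k + 1) * b (j - k) := by
    rw [Finset.sum_range_succ, Nat.choose_succ_self]
    simp
  have h3 : ∑ k ∈ range (j + 1), (j.choose k : ℂ) * a k * b (j - k + 1) =
      a 0 * b (j + 1) + ∑ k ∈ range j, (j.choose (k + 1) : ℂ) * a (k + 1) * b (j - k) := by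
    rw [Finset.sum_range_succ' (fun k => (j.choose k : ℂ) * a k * b (j - k + 1)) j]
    rw [add_comm]
    congr 1
    · simp
    · refine Finset.sum_congr rfl fun k hk => ?_
      have hk' := Finset.mem_range.mp hk
      congr 2
      omega
  rw [h2, h3]
  ring

private lemma iteratedDeriv_mul_of_isOpen {s : Set ℝ} (hs : IsOpen s) :
    ∀ (j : ℕ) (f g : ℝ → ℂ), ContDiffOn ℝ j f s → ContDiffOn ℝ j g s → ∀ x ∈ s,
      iteratedDeriv j (fun y => f y * g y) x =
        ∑ k ∈ range (j + 1), (j.choose k : ℂ) * iteratedDeriv k f x *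
          iteratedDeriv (j - k) g x := by
  intro j
  induction j with
  | zero => intro f g _ _ x _; simp
  | succ j IH =>
    intro f g hf hg x hx
    have hone : (1 : WithTop ℕ∞) ≤ ((j : ℕ) + 1 : ℕ) := by exact_mod_cast Nat.one_le_iff_ne_zero.2 (Nat.succ_ne_zero j)
    have hjle : ((j : ℕ) : WithTop ℕ∞) ≤ ((j : ℕ) + 1 : ℕ) := by exact_mod_cast Nat.le_succ j
    have hfd : ∀ y ∈ s, DifferentiableAt ℝ f y := fun y hy =>
      ((hf.differentiableOn (by exact_mod_cast Nat.succ_ne_zero j)) y hy).differentiableAt (hs.mem_nhds hy)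
    have hgd : ∀ y ∈ s, DifferentiableAt ℝ g y := fun y hy =>
      ((hg.differentiableOn (by exact_mod_cast Nat.succ_ne_zero j)) y hy).differentiableAt (hs.mem_nhds hy)
    have hf' : ContDiffOn ℝ j (deriv f) s := hf.deriv_of_isOpen hs (by exact_mod_cast le_rfl)
    have hg' : ContDiffOn ℝ j (deriv g) s := hg.deriv_of_isOpen hs (by exact_mod_cast le_rfl)
    have hfj : ContDiffOn ℝ j f s := hf.of_le hjle
    have hgj : ContDiffOn ℝ j g s := hg.of_le hjle
    have heq : Set.EqOn (deriv fun y => f y * g y)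
        (fun y => deriv f y * g y + f y * deriv g y) s := fun y hy =>
      deriv_mul (hfd y hy) (hgd y hy)
    rw [iteratedDeriv_succ', heq.iteratedDeriv_of_isOpen hs j hx,
      iteratedDeriv_add_of_isOpen hs hx (hf'.mul hgj) (hfj.mul hg'),
      IH _ _ hf' hgj x hx, IH _ _ hfj hg' x hx]
    simp only [← iteratedDeriv_succ']
    exact binom_aux j (fun k => iteratedDeriv k f x) (fun k => iteratedDeriv k g x)

noncomputable def momPoly (n m : ℕ) : MvPolynomial (Fin n) ℝ :=
  if h : 1 ≤ m ∧ m ≤ n then MvPolynomial.X ⟨m - 1, by omega⟩ else 1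

noncomputable def cumPoly (n : ℕ) : ℕ → MvPolynomial (Fin n) ℝ
  | 0 => 0
  | (j + 1) => momPoly n (j + 1) - ∑ k ∈ (range j).attach,
      (j.choose k.1 : ℝ) • (cumPoly n (k.1 + 1) * momPoly n (j - k.1))
  decreasing_by have := Finset.mem_range.mp k.2; omega

theorem cumulant_eq_moments {Ω : Type*} [MeasurableSpace Ω] (μ : Measure Ω)
    [IsProbabilityMeasure μ] (n : ℕ) (hn : 1 ≤ n) (X : Ω → ℝ)
    (hXm : AEStronglyMeasurable X μ)
    (hXint : ∀ k, k ≤ n → Integrable (fun ω => |X ω| ^ k) μ) :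
    cumulant μ X n =
      ((MvPolynomial.eval fun m : Fin n => ∫ ω, X ω ^ ((m : ℕ) + 1) ∂μ) (cumPoly n n) : ℝ) := by
  classical
  set g : ℕ → ℝ → ℂ := fun k z => ∫ ω, (Complex.I * X ω) ^ k * Complex.exp (Complex.I * z * X ω) ∂μ with hg
  -- measurability
  have meas : ∀ (k : ℕ) (z : ℝ),
      AEStronglyMeasurable (fun ω => (Complex.I * X ω) ^ k * Complex.exp (Complex.I * z * X ω)) μ := by
    intro k z
    have hXc : AEStronglyMeasurable (fun ω => (X ω : ℂ)) μ :=
      Complex.continuous_ofReal.comp_aestronglyMeasurable hXm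
    exact ((aestronglyMeasurable_const.mul hXc).pow k).mul
      (Complex.continuous_exp.comp_aestronglyMeasurable (aestronglyMeasurable_const.mul hXc))
  -- norms
  have normeq : ∀ (k : ℕ) (z : ℝ) (ω : Ω),
      ‖(Complex.I * X ω) ^ k * Complex.exp (Complex.I * z * X ω)‖ = |X ω| ^ k := by
    intro k z ω
    rw [norm_mul, norm_pow, norm_mul, Complex.norm_I, one_mul, Complex.norm_real]
    have : (Complex.I * (z : ℝ) * (X ω : ℝ)) = ((z * X ω : ℝ) : ℂ) * Complex.I := by
      push_cast; ring
    rw [this, Complex.norm_exp_ofReal_mul_I, mul_one, Real.norm_eq_abs]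
  -- integrability
  have intg : ∀ k ≤ n, ∀ z : ℝ,
      Integrable (fun ω => (Complex.I * X ω) ^ k * Complex.exp (Complex.I * z * X ω)) μ := by
    intro k hk z
    refine (hXint k hk).mono' (meas k z) ?_
    filter_upwards with ω
    rw [normeq k z ω]
  -- pointwise derivative
  have ptderiv : ∀ (k : ℕ) (c : ℝ) (z : ℝ),
      HasDerivAt (fun z : ℝ => (Complex.I * c) ^ k * Complex.exp (Complex.I * z * c))
        ((Complex.I * c) ^ (k + 1) * Complex.exp (Complex.I * z * c)) z := by
    intro k c z
    have h0 : (fun z : ℝ => (Complex.I * c) ^ k * Complex.exp (Complex.I * z * c)) =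
        fun z : ℝ => (Complex.I * c) ^ k * Complex.exp ((z : ℂ) * (Complex.I * c)) := by
      funext w; ring_nf
    have h1 : HasDerivAt (fun z : ℝ => (z : ℂ)) 1 z := by
      exact Complex.ofRealCLM.hasDerivAt (x := z)
    have h2 : HasDerivAt (fun z : ℝ => (z : ℂ) * (Complex.I * c)) (Complex.I * c) z := by
      simpa using h1.mul_const (Complex.I * c)
    have h3 := (h2.cexp).const_mul ((Complex.I * c) ^ k)
    rw [h0]
    refine h3.congr_deriv ?_
    rw [pow_succ]
    ring_nf
  -- derivative of g
  have hasDeriv : ∀ k, k < n → ∀ z₀ : ℝ, HasDerivAt (g k) (g (k + 1) z₀) z₀ := by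
    intro k hk z₀
    have := hasDerivAt_integral_of_dominated_loc_of_deriv_le (μ := μ)
      (F := fun (z : ℝ) ω => (Complex.I * X ω) ^ k * Complex.exp (Complex.I * z * X ω))
      (F' := fun (z : ℝ) ω => (Complex.I * X ω) ^ (k + 1) * Complex.exp (Complex.I * z * X ω))
      (x₀ := z₀) (bound := fun ω => |X ω| ^ (k + 1)) (s := Metric.ball z₀ 1) (Metric.ball_mem_nhds z₀ one_pos)
      (Filter.Eventually.of_forall fun z => meas k z)
      (intg k (le_of_lt hk) z₀) (meas (k + 1) z₀)
      (Filter.Eventually.of_forall fun ω x _ => le_of_eq (normeq (k + 1) x ω))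
      (hXint (k + 1) hk)
      (Filter.Eventually.of_forall fun ω x _ => ptderiv k (X ω) x)
    exact this.2
  have derivg : ∀ k, k < n → deriv (g k) = g (k + 1) := fun k hk =>
    funext fun z => (hasDeriv k hk z).deriv
  -- continuity of each g k
  have contg0 : ∀ k, k ≤ n → Continuous (g k) := by
    intro k hk
    refine continuous_of_dominated (bound := fun ω => |X ω| ^ k)
      (fun z => meas k z) (fun z => Filter.Eventually.of_forall fun ω => le_of_eq (normeq k z ω))
      (hXint k hk) ?_
    filter_upwards with ω
    have : Continuous fun z : ℝ => Complex.I * (z : ℂ) * (X ω) := by fun_prop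
    exact continuous_const.mul (Complex.continuous_exp.comp this)
  -- smoothness
  have contg : ∀ j k, j + k ≤ n → ContDiff ℝ j (g k) := by
    intro j
    induction j with
    | zero => intro k hk; exact contDiff_zero.2 (contg0 k (by omega))
    | succ j IH =>
      intro k hk
      have hcast : ((j + 1 : ℕ) : WithTop ℕ∞) = (j : WithTop ℕ∞) + 1 := by push_cast; rfl
      rw [hcast, contDiff_succ_iff_deriv]
      refine ⟨fun z => (hasDeriv k (by omega) z).differentiableAt, by simp, ?_⟩
      rw [derivg k (by omega)]
      exact IH (k + 1) (by omega)
  -- iterated derivatives of g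
  have iterg : ∀ j k, j + k ≤ n → iteratedDeriv j (g k) = g (k + j) := by
    intro j
    induction j with
    | zero => intro k _; simp
    | succ j IH =>
      intro k hk
      rw [iteratedDeriv_succ', derivg k (by omega), IH (k + 1) (by omega)]
      have h : k + 1 + j = k + (j + 1) := by omega
      rw [h]
  -- values at 0
  have g_zero : ∀ k, k ≤ n → g k 0 = Complex.I ^ k * ((∫ ω, X ω ^ k ∂μ : ℝ) : ℂ) := by
    intro k hk
    have : g k 0 = ∫ ω, Complex.I ^ k * ((X ω ^ k : ℝ) : ℂ) ∂μ := by
      refine integral_congr_ae (Filter.Eventually.of_forall fun ω => ?_)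
      push_cast
      simp [mul_pow]
    rw [this, integral_const_mul]
    congr 1
    exact integral_ofReal
  have g00 : g 0 0 = 1 := by
    simpa using g_zero 0 (by omega)
  set M : ℕ → ℝ := fun k => ∫ ω, X ω ^ k ∂μ with hM
  have M0 : M 0 = 1 := by simp [hM]
  set U : Set ℝ := (g 0) ⁻¹' Complex.slitPlane with hU
  have openU : IsOpen U := Complex.isOpen_slitPlane.preimage (contg0 0 (by omega))
  have h0U : (0 : ℝ) ∈ U := by
    simp only [hU, Set.mem_preimage, g00]
    exact Complex.one_mem_slitPlane
  have gne : ∀ z ∈ U, g 0 z ≠ 0 := fun z hz => Complex.slitPlane_ne_zero hz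
  set h : ℝ → ℂ := fun z => Complex.log (g 0 z) with hh
  have dh : ∀ z ∈ U, HasDerivAt h (g 1 z / g 0 z) z := fun z hz =>
    (hasDeriv 0 (by omega) z).clog_real hz
  set d : ℝ → ℂ := fun z => g 1 z / g 0 z with hd
  have derivh_eq : Set.EqOn (deriv h) d U := fun z hz => (dh z hz).deriv
  have rel : Set.EqOn (g 1) (fun z => d z * g 0 z) U := by
    intro z hz
    simp only [hd]
    rw [div_mul_cancel₀ _ (gne z hz)]
  have hdC : ContDiffOn ℝ (n - 1 : ℕ) d U := by
    simp only [hd, div_eq_mul_inv]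
    exact ((contg (n - 1) 1 (by omega)).contDiffOn).mul
      (((contg (n - 1) 0 (by omega)).contDiffOn).inv gne)
  set Mf : Fin n → ℝ := fun i => ∫ ω, X ω ^ ((i : ℕ) + 1) ∂μ with hMf
  have evalMom : ∀ m, m ≤ n → MvPolynomial.eval Mf (momPoly n m) = M m := by
    intro m hm
    by_cases h1 : 1 ≤ m
    · rw [momPoly, dif_pos ⟨h1, hm⟩, MvPolynomial.eval_X]
      have hm1 : m - 1 + 1 = m := by omega
      simp only [hMf, hM, hm1]
    · have hm0 : m = 0 := by omega
      subst hm0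
      rw [momPoly, dif_neg (by omega), M0]
      simp
  have key : ∀ m, m ≤ n → iteratedDeriv m h 0 =
      Complex.I ^ m * ((MvPolynomial.eval Mf (cumPoly n m) : ℝ) : ℂ) := by
    intro m
    induction m using Nat.strong_induction_on with
    | _ m IH =>
      match m with
      | 0 =>
        intro _
        simp [cumPoly, hh, g00]
      | (j + 1) =>
        intro hm
        have hjn : j ≤ n - 1 := by omega
        have hcastj : ((j : ℕ) : WithTop ℕ∞) ≤ ((n - 1 : ℕ) : WithTop ℕ∞) := by
          exact_mod_cast hjn
        have hL := iteratedDeriv_mul_of_isOpen openU j d (g 0)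
          (hdC.of_le hcastj) ((contg j 0 (by omega)).contDiffOn) 0 h0U
        have E1 : iteratedDeriv j (g 1) 0 = g (1 + j) 0 := by rw [iterg j 1 (by omega)]
        have E2 : iteratedDeriv j (g 1) 0 = iteratedDeriv j (fun z => d z * g 0 z) 0 :=
          rel.iteratedDeriv_of_isOpen openU j h0U
        have E4 : ∀ k : ℕ, iteratedDeriv k d 0 = iteratedDeriv (k + 1) h 0 := by
          intro k
          rw [iteratedDeriv_succ']
          exact (derivh_eq.iteratedDeriv_of_isOpen openU k h0U).symm
        have E5 : ∀ k : ℕ, k ≤ j → iteratedDeriv (j - k) (g 0) 0 =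
            Complex.I ^ (j - k) * ((M (j - k) : ℝ) : ℂ) := by
          intro k hk
          have := iterg (j - k) 0 (by omega)
          rw [this]
          simpa using g_zero (j - k) (by omega)
        -- the master equation
        have master : Complex.I ^ (1 + j) * ((M (1 + j) : ℝ) : ℂ) =
            (∑ k ∈ range j, (j.choose k : ℂ) * iteratedDeriv (k + 1) h 0 *
              (Complex.I ^ (j - k) * ((M (j - k) : ℝ) : ℂ))) + iteratedDeriv (j + 1) h 0 := by
          rw [← g_zero (1 + j) (by omega), ← E1, E2, hL]
          rw [Finset.sum_range_succ]
          congr 1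
          · refine Finset.sum_congr rfl fun k hk => ?_
            rw [E4 k, E5 k (le_of_lt (Finset.mem_range.mp hk))]
          · rw [E4 j]
            simp [g00]
        -- rewrite lower-order terms using IH
        have hsum : (∑ k ∈ range j, (j.choose k : ℂ) * iteratedDeriv (k + 1) h 0 *
              (Complex.I ^ (j - k) * ((M (j - k) : ℝ) : ℂ))) =
            Complex.I ^ (j + 1) * ∑ k ∈ range j, (j.choose k : ℂ) *
              ((MvPolynomial.eval Mf (cumPoly n (k + 1)) : ℝ) : ℂ) * ((M (j - k) : ℝ) : ℂ) := by
          rw [Finset.mul_sum]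
          refine Finset.sum_congr rfl fun k hk => ?_
          have hkj := Finset.mem_range.mp hk
          rw [IH (k + 1) (by omega) (by omega)]
          have hpow : Complex.I ^ (k + 1) * Complex.I ^ (j - k) = Complex.I ^ (j + 1) := by
            rw [← pow_add]
            congr 1
            omega
          calc (j.choose k : ℂ) * (Complex.I ^ (k + 1) *
                ((MvPolynomial.eval Mf (cumPoly n (k + 1)) : ℝ) : ℂ)) *
                (Complex.I ^ (j - k) * ((M (j - k) : ℝ) : ℂ))
              = (Complex.I ^ (k + 1) * Complex.I ^ (j - k)) * ((j.choose k : ℂ) *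
                ((MvPolynomial.eval Mf (cumPoly n (k + 1)) : ℝ) : ℂ) *
                ((M (j - k) : ℝ) : ℂ)) := by ring
            _ = _ := by rw [hpow]
        -- evaluate the polynomial
        have evalQ : (MvPolynomial.eval Mf (cumPoly n (j + 1)) : ℝ) =
            M (j + 1) - ∑ k ∈ range j, (j.choose k : ℝ) *
              MvPolynomial.eval Mf (cumPoly n (k + 1)) * M (j - k) := by
          rw [cumPoly]
          rw [map_sub, map_sum, evalMom (j + 1) hm]
          congr 1
          rw [← Finset.sum_attach (range j) (fun k => (j.choose k : ℝ) *
            MvPolynomial.eval Mf (cumPoly n (k + 1)) * M (j - k))]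
          refine Finset.sum_congr rfl fun k _ => ?_
          have hkj := Finset.mem_range.mp k.2
          rw [MvPolynomial.smul_eval, map_mul, evalMom (j - k.1) (by omega)]
          ring
        have goal' : iteratedDeriv (j + 1) h 0 =
            Complex.I ^ (j + 1) * ((M (j + 1) : ℝ) : ℂ) -
            Complex.I ^ (j + 1) * ∑ k ∈ range j, (j.choose k : ℂ) *
              ((MvPolynomial.eval Mf (cumPoly n (k + 1)) : ℝ) : ℂ) * ((M (j - k) : ℝ) : ℂ) := by
          rw [← hsum]
          have h1j : (1 + j) = (j + 1) := by omega
          rw [h1j] at master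
          linear_combination -master
        rw [goal', evalQ]
        push_cast
        ring
  have hfun : (fun z : ℝ => Complex.log (∫ ω, Complex.exp (Complex.I * z * X ω) ∂μ)) = h := by
    funext z
    simp only [hh, hg, pow_zero, one_mul]
  rw [cumulant, hfun, key n le_rfl, ← mul_assoc, ← mul_pow]
  simp [Complex.I_mul_I, hMf]


private lemma integrable_abs_pow_of_memLp {Ω : Type*} [MeasurableSpace Ω] {μ : Measure Ω}
    [IsProbabilityMeasure μ] {n : ℕ} {X : Ω → ℝ} (hX : MemLp X ((n : ℝ≥0∞)) μ)
    {k : ℕ} (hk : k ≤ n) : Integrable (fun ω => |X ω| ^ k) μ := by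
  rcases Nat.eq_zero_or_pos k with rfl | hk0
  · simpa using integrable_const (1 : ℝ)
  · have h1 : MemLp X ((k : ℝ≥0∞)) μ := hX.mono_exponent (by exact_mod_cast hk)
    have h2 := h1.integrable_norm_rpow (by exact_mod_cast hk0.ne') (by simp)
    simp only [ENNReal.toReal_natCast] at h2
    have h3 : (fun ω => ‖X ω‖ ^ (k : ℝ)) = fun ω => |X ω| ^ k := by
      funext ω; rw [Real.norm_eq_abs, Real.rpow_natCast]
    rwa [h3] at h2

private lemma integrable_pow_of_memLp {Ω : Type*} [MeasurableSpace Ω] {μ : Measure Ω}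
    [IsProbabilityMeasure μ] {n : ℕ} {X : Ω → ℝ} (hX : MemLp X ((n : ℝ≥0∞)) μ)
    {k : ℕ} (hk : k ≤ n) : Integrable (fun ω => X ω ^ k) μ :=
  (integrable_abs_pow_of_memLp hX hk).mono'
    ((hX.aestronglyMeasurable.aemeasurable.pow_const k).aestronglyMeasurable)
    (Filter.Eventually.of_forall fun ω => by simp [abs_pow])

theorem moment_continuity {Ω : Type*} [MeasurableSpace Ω] (μ : Measure Ω)
    [IsProbabilityMeasure μ] (n : ℕ) (hn : 1 ≤ n) (m : ℕ) (hm : m ≤ n) (X : Ω → ℝ)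
    (hX : MemLp X (ENNReal.ofReal (n : ℝ)) μ) {ε : ℝ} (hε : 0 < ε) :
    ∃ δ > (0 : ℝ), ∀ Y : Ω → ℝ, MemLp Y (ENNReal.ofReal (n : ℝ)) μ →
      eLpNorm (X - Y) (ENNReal.ofReal (n : ℝ)) μ < ENNReal.ofReal δ →
      |(∫ ω, X ω ^ m ∂μ) - ∫ ω, Y ω ^ m ∂μ| < ε := by
  have hen : ENNReal.ofReal (n : ℝ) = (n : ℝ≥0∞) := ENNReal.ofReal_natCast n
  rw [hen] at hX ⊢
  rcases Nat.eq_zero_or_pos m with rfl | hm0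
  · exact ⟨1, one_pos, fun Y _ _ => by simpa using hε⟩
  -- setup
  set en : ℝ≥0∞ := (n : ℝ≥0∞) with hen'
  have hn0 : en ≠ 0 := by simp [hen']; omega
  have hntop : en ≠ ∞ := by simp [hen']
  have h1en : 1 ≤ en := by rw [hen']; exact_mod_cast hn
  set r : ℝ≥0∞ := (1 - en⁻¹)⁻¹ with hr
  have hpqr : 1 / (1 : ℝ≥0∞) = 1 / en + 1 / r := by
    rw [hr]
    simp only [one_div, inv_inv]
    rw [add_comm, tsub_add_cancel_of_le (ENNReal.inv_le_one.2 h1en), inv_one]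
  -- the quantities
  set B : ℝ≥0∞ := 2 * eLpNorm X en μ + 1 with hB
  have hBtop : B ≠ ∞ := by
    rw [hB]
    have h2X := hX.2
    finiteness
  set K : ℝ≥0∞ := (m : ℝ≥0∞) * B ^ ((m - 1 : ℕ) : ℝ) with hK
  have hKtop : K ≠ ∞ := by
    rw [hK]
    exact (ENNReal.mul_lt_top (by simp)
      (ENNReal.rpow_lt_top_of_nonneg (by positivity) hBtop)).ne
  -- the key bound
  have keybound : ∀ Y : Ω → ℝ, MemLp Y en μ → eLpNorm (X - Y) en μ ≤ 1 →
      ENNReal.ofReal |(∫ ω, X ω ^ m ∂μ) - ∫ ω, Y ω ^ m ∂μ| ≤ eLpNorm (X - Y) en μ * K := by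
    intro Y hY hd1
    set T : Ω → ℝ := fun ω => ∑ i ∈ range m, X ω ^ i * Y ω ^ (m - 1 - i) with hT
    have hTmeas : AEStronglyMeasurable T μ := by
      refine (Finset.aemeasurable_fun_sum (range m) fun i _ => ?_).aestronglyMeasurable
      exact (hX.aestronglyMeasurable.aemeasurable.pow_const i).mul
        (hY.aestronglyMeasurable.aemeasurable.pow_const (m - 1 - i))
    have hXYmeas : AEStronglyMeasurable (fun ω => X ω - Y ω) μ :=
      hX.aestronglyMeasurable.sub hY.aestronglyMeasurable
    have hfunext : (fun ω => (X ω - Y ω) * T ω) = fun ω => X ω ^ m - Y ω ^ m := by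
      funext ω
      rw [mul_comm]
      exact geom_sum₂_mul (X ω) (Y ω) m
    -- Hölder
    have holder : eLpNorm (fun ω => X ω ^ m - Y ω ^ m) 1 μ ≤
        eLpNorm (fun ω => X ω - Y ω) en μ * eLpNorm T r μ := by
      rw [← hfunext]
      haveI : ENNReal.HolderTriple en r 1 := ⟨by simpa [one_div] using hpqr.symm⟩
      exact (eLpNorm_le_eLpNorm_mul_eLpNorm'_of_norm (p := en) (q := r) (r := 1) hXYmeas hTmeas (· * ·) 1
        (Filter.Eventually.of_forall fun ω => by simp [norm_mul])).trans (by simp)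
    -- bound on T
    have hTle : ∀ ω, ‖T ω‖ ≤ ‖(m : ℝ) * (|X ω| + |Y ω|) ^ (m - 1)‖ := by
      intro ω
      set s := |X ω| + |Y ω| with hs
      have hs0 : 0 ≤ s := by positivity
      have h1 : ‖T ω‖ ≤ ∑ i ∈ range m, |X ω ^ i * Y ω ^ (m - 1 - i)| := by
        rw [Real.norm_eq_abs, hT]
        exact Finset.abs_sum_le_sum_abs _ _
      have h2 : ∀ i ∈ range m, |X ω ^ i * Y ω ^ (m - 1 - i)| ≤ s ^ (m - 1) := by
        intro i hi
        have hi' := Finset.mem_range.mp hi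
        rw [abs_mul, abs_pow, abs_pow]
        calc |X ω| ^ i * |Y ω| ^ (m - 1 - i) ≤ s ^ i * s ^ (m - 1 - i) := by
              gcongr
              · exact le_trans (le_abs_self _) (by rw [abs_abs]; simp [hs])
              · exact le_trans (le_abs_self _) (by rw [abs_abs]; simp [hs])
          _ = s ^ (m - 1) := by rw [← pow_add]; congr 1; omega
      calc ‖T ω‖ ≤ ∑ i ∈ range m, |X ω ^ i * Y ω ^ (m - 1 - i)| := h1
        _ ≤ ∑ _i ∈ range m, s ^ (m - 1) := Finset.sum_le_sum h2
        _ = (m : ℝ) * s ^ (m - 1) := by rw [Finset.sum_const, card_range, nsmul_eq_mul]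
        _ ≤ ‖(m : ℝ) * s ^ (m - 1)‖ := le_abs_self _
    have hTbound : eLpNorm T r μ ≤ K := by
      calc eLpNorm T r μ ≤ eLpNorm (fun ω => (m : ℝ) * (|X ω| + |Y ω|) ^ (m - 1)) r μ :=
            eLpNorm_mono hTle
        _ = ‖(m : ℝ)‖₊ * eLpNorm (fun ω => (|X ω| + |Y ω|) ^ (m - 1)) r μ := by
            rw [← enorm_eq_nnnorm, ← eLpNorm_const_smul]
            rfl
        _ ≤ (m : ℝ≥0∞) * B ^ ((m - 1 : ℕ) : ℝ) := by
            gcongr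
            · simp [Real.nnnorm_natCast]
            · -- eLpNorm ((|X|+|Y|)^(m-1)) r ≤ B ^ (m-1)
              have habsX : AEStronglyMeasurable (fun ω => |X ω|) μ := by
                simpa [Real.norm_eq_abs] using hX.aestronglyMeasurable.norm
              have habsY : AEStronglyMeasurable (fun ω => |Y ω|) μ := by
                simpa [Real.norm_eq_abs] using hY.aestronglyMeasurable.norm
              have hs_meas : AEStronglyMeasurable (fun ω => |X ω| + |Y ω|) μ :=
                habsX.add habsY
              have hr0 : r ≠ 0 := ENNReal.inv_ne_zero.2 (tsub_le_self.trans_lt ENNReal.one_lt_top).ne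
              rcases Nat.eq_zero_or_pos (m - 1) with h0 | hpos
              · rw [h0]
                simp only [pow_zero, Nat.cast_zero, ENNReal.rpow_zero]
                have : eLpNorm (fun _ : Ω => (1 : ℝ)) r μ = 1 := by
                  rw [eLpNorm_const (1 : ℝ) hr0 (NeZero.ne μ)]
                  simp
                rw [this]
              · have heq : (fun ω => (|X ω| + |Y ω|) ^ (m - 1)) =
                    fun ω => ‖|X ω| + |Y ω|‖ ^ ((m - 1 : ℕ) : ℝ) := by
                  funext ω
                  rw [Real.norm_of_nonneg (by positivity), Real.rpow_natCast]
                rw [heq, eLpNorm_norm_rpow _ (by positivity : (0 : ℝ) < ((m - 1 : ℕ) : ℝ))]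
                refine ENNReal.rpow_le_rpow ?_ (by positivity)
                -- exponent bound
                have hn2 : 2 ≤ n := by omega
                have hen1lt : (1 : ℝ≥0∞) < en := by
                  rw [hen']; exact_mod_cast (by omega : 1 < n)
                have hen1ne : en - 1 ≠ 0 := (tsub_pos_iff_lt.2 hen1lt).ne'
                have hen1top : en - 1 ≠ ∞ := (tsub_le_self.trans_lt hntop.lt_top).ne
                have hsub : 1 - en⁻¹ = (en - 1) * en⁻¹ := by
                  rw [ENNReal.sub_mul (fun _ _ => ENNReal.inv_ne_top.2 hn0),
                    ENNReal.mul_inv_cancel hn0 hntop, one_mul]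
                have hr_eq : r = (en - 1)⁻¹ * en := by
                  rw [hr, hsub, ENNReal.mul_inv (Or.inr (ENNReal.inv_ne_top.2 hn0))
                    (Or.inr (ENNReal.inv_ne_zero.2 hntop)), inv_inv]
                have hexp : r * ENNReal.ofReal ((m - 1 : ℕ) : ℝ) ≤ en := by
                  rw [ENNReal.ofReal_natCast, hr_eq]
                  have hcast : ((m - 1 : ℕ) : ℝ≥0∞) ≤ en - 1 := by
                    have h1 : ((n - 1 : ℕ) : ℝ≥0∞) = en - 1 := by
                      rw [hen', ENNReal.natCast_sub, Nat.cast_one]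
                    rw [← h1]
                    exact_mod_cast (by omega : m - 1 ≤ n - 1)
                  calc (en - 1)⁻¹ * en * ((m - 1 : ℕ) : ℝ≥0∞)
                      ≤ (en - 1)⁻¹ * en * (en - 1) := by gcongr
                    _ = ((en - 1)⁻¹ * (en - 1)) * en := by ring
                    _ = 1 * en := by rw [ENNReal.inv_mul_cancel hen1ne hen1top]
                    _ = en := one_mul en
                calc eLpNorm (fun ω => |X ω| + |Y ω|) (r * ENNReal.ofReal ((m - 1 : ℕ) : ℝ)) μ
                    ≤ eLpNorm (fun ω => |X ω| + |Y ω|) en μ :=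
                      eLpNorm_le_eLpNorm_of_exponent_le hexp hs_meas
                  _ ≤ eLpNorm (fun ω => |X ω|) en μ + eLpNorm (fun ω => |Y ω|) en μ :=
                      eLpNorm_add_le habsX habsY h1en
                  _ = eLpNorm X en μ + eLpNorm Y en μ := by
                      simp_rw [← Real.norm_eq_abs, eLpNorm_norm]
                  _ ≤ eLpNorm X en μ + (eLpNorm X en μ + eLpNorm (X - Y) en μ) := by
                      gcongr
                      have : Y = fun ω => X ω - (X ω - Y ω) := by funext ω; ring
                      calc eLpNorm Y en μ = eLpNorm (X - (X - Y)) en μ := by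
                            have hYeq : X - (X - Y) = Y := by funext ω; simp
                            rw [hYeq]
                        _ ≤ eLpNorm X en μ + eLpNorm (X - Y) en μ :=
                            eLpNorm_sub_le hX.aestronglyMeasurable
                              (hX.aestronglyMeasurable.sub hY.aestronglyMeasurable) h1en
                  _ ≤ B := by
                      rw [hB]
                      calc eLpNorm X en μ + (eLpNorm X en μ + eLpNorm (X - Y) en μ)
                          ≤ eLpNorm X en μ + (eLpNorm X en μ + 1) := by gcongr
                        _ = 2 * eLpNorm X en μ + 1 := by ring
        _ = K := hK.symm
    -- combine
    have hintX : Integrable (fun ω => X ω ^ m) μ := integrable_pow_of_memLp hX hm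
    have hintY : Integrable (fun ω => Y ω ^ m) μ := integrable_pow_of_memLp hY hm
    have hintD : Integrable (fun ω => X ω ^ m - Y ω ^ m) μ := hintX.sub hintY
    have e1 : (∫ ω, X ω ^ m ∂μ) - ∫ ω, Y ω ^ m ∂μ = ∫ ω, (X ω ^ m - Y ω ^ m) ∂μ :=
      (integral_sub hintX hintY).symm
    have e2 : |∫ ω, (X ω ^ m - Y ω ^ m) ∂μ| ≤ ∫ ω, |X ω ^ m - Y ω ^ m| ∂μ := by
      simpa [Real.norm_eq_abs] using
        norm_integral_le_integral_norm (fun ω => X ω ^ m - Y ω ^ m) (μ := μ)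
    have e3 : ENNReal.ofReal (∫ ω, |X ω ^ m - Y ω ^ m| ∂μ) =
        eLpNorm (fun ω => X ω ^ m - Y ω ^ m) 1 μ := by
      rw [eLpNorm_one_eq_lintegral_enorm]
      simpa [Real.norm_eq_abs] using ofReal_integral_norm_eq_lintegral_enorm hintD
    calc ENNReal.ofReal |(∫ ω, X ω ^ m ∂μ) - ∫ ω, Y ω ^ m ∂μ|
        ≤ ENNReal.ofReal (∫ ω, |X ω ^ m - Y ω ^ m| ∂μ) := by
          rw [e1]; exact ENNReal.ofReal_le_ofReal e2
      _ = eLpNorm (fun ω => X ω ^ m - Y ω ^ m) 1 μ := e3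
      _ ≤ eLpNorm (fun ω => X ω - Y ω) en μ * eLpNorm T r μ := holder
      _ ≤ eLpNorm (X - Y) en μ * K := by
          have hre : eLpNorm (fun ω => X ω - Y ω) en μ = eLpNorm (X - Y) en μ := rfl
          rw [hre]
          exact mul_le_mul_right hTbound _
  -- choose δ
  set Kr : ℝ := K.toReal with hKr
  have hKr0 : 0 ≤ Kr := ENNReal.toReal_nonneg
  refine ⟨min 1 (ε / (Kr + 1)), by positivity, fun Y hY hlt => ?_⟩
  have hd1 : eLpNorm (X - Y) en μ ≤ 1 :=
    le_trans hlt.le (by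
      calc ENNReal.ofReal (min 1 (ε / (Kr + 1))) ≤ ENNReal.ofReal 1 :=
            ENNReal.ofReal_le_ofReal (min_le_left _ _)
        _ = 1 := ENNReal.ofReal_one)
  have hb := keybound Y hY hd1
  have hKK : K ≤ ENNReal.ofReal Kr := le_of_eq (ENNReal.ofReal_toReal hKtop).symm
  have hfin : ENNReal.ofReal |(∫ ω, X ω ^ m ∂μ) - ∫ ω, Y ω ^ m ∂μ| < ENNReal.ofReal ε := by
    refine lt_of_le_of_lt hb ?_
    calc eLpNorm (X - Y) en μ * K
        ≤ ENNReal.ofReal (min 1 (ε / (Kr + 1))) * ENNReal.ofReal Kr := mul_le_mul' hlt.le hKK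
      _ ≤ ENNReal.ofReal (ε / (Kr + 1)) * ENNReal.ofReal Kr :=
          mul_le_mul' (ENNReal.ofReal_le_ofReal (min_le_right _ _)) le_rfl
      _ = ENNReal.ofReal (ε / (Kr + 1) * Kr) := (ENNReal.ofReal_mul (by positivity)).symm
      _ < ENNReal.ofReal ε := by
          refine (ENNReal.ofReal_lt_ofReal_iff hε).2 ?_
          rw [div_mul_eq_mul_div, div_lt_iff₀ (by positivity)]
          nlinarith
  exact (ENNReal.ofReal_lt_ofReal_iff hε).1 hfin

/-- The `n`-th cumulant is a fixed polynomial in the moments `E[X^m]`, `m ≤ n`; each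
moment map is continuous on `L^n`; and `X ↦ κ_n(X)` is continuous on `L^p` (`n ≤ p`). -/
theorem cumulant_continuous {Ω : Type*} [MeasurableSpace Ω] (μ : Measure Ω)
    [IsProbabilityMeasure μ] (p : ℝ) (hp : 1 ≤ p) (n : ℕ) (hn : 1 ≤ n) (hnp : (n : ℝ) ≤ p) :
    (∃ Q : MvPolynomial (Fin n) ℝ, ∀ X : Ω → ℝ, MemLp X (ENNReal.ofReal p) μ →
      cumulant μ X n =
        ((MvPolynomial.eval fun m : Fin n => ∫ ω, X ω ^ ((m : ℕ) + 1) ∂μ) Q : ℝ)) ∧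
    (∀ m : ℕ, m ≤ n → ∀ X : Ω → ℝ, MemLp X (ENNReal.ofReal (n : ℝ)) μ →
      ∀ ε > (0 : ℝ), ∃ δ > (0 : ℝ), ∀ Y : Ω → ℝ, MemLp Y (ENNReal.ofReal (n : ℝ)) μ →
        eLpNorm (X - Y) (ENNReal.ofReal (n : ℝ)) μ < ENNReal.ofReal δ →
        |(∫ ω, X ω ^ m ∂μ) - ∫ ω, Y ω ^ m ∂μ| < ε) ∧
    (∀ X : Ω → ℝ, MemLp X (ENNReal.ofReal p) μ →
      ∀ ε > (0 : ℝ), ∃ δ > (0 : ℝ), ∀ Y : Ω → ℝ, MemLp Y (ENNReal.ofReal p) μ →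
        eLpNorm (X - Y) (ENNReal.ofReal p) μ < ENNReal.ofReal δ →
        ‖cumulant μ X n - cumulant μ Y n‖ < ε) := by
  have hen : (ENNReal.ofReal (n : ℝ)) ≤ ENNReal.ofReal p := ENNReal.ofReal_le_ofReal hnp
  have part1 : ∀ X : Ω → ℝ, MemLp X (ENNReal.ofReal p) μ →
      cumulant μ X n =
        ((MvPolynomial.eval fun m : Fin n => ∫ ω, X ω ^ ((m : ℕ) + 1) ∂μ) (cumPoly n n) : ℝ) := by
    intro X hX
    refine cumulant_eq_moments μ n hn X hX.aestronglyMeasurable fun k hk => ?_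
    have hXn : MemLp X ((n : ℝ≥0∞)) μ := by
      rw [← ENNReal.ofReal_natCast]
      exact hX.mono_exponent hen
    exact integrable_abs_pow_of_memLp hXn hk
  refine ⟨⟨cumPoly n n, part1⟩, fun m hm X hX ε hε => moment_continuity μ n hn m hm X hX hε,
    fun X hX ε hε => ?_⟩
  have hXn : MemLp X (ENNReal.ofReal (n : ℝ)) μ := hX.mono_exponent hen
  set v : Fin n → ℝ := fun m => ∫ ω, X ω ^ ((m : ℕ) + 1) ∂μ with hv
  have hcont : Continuous fun w : Fin n → ℝ => MvPolynomial.eval w (cumPoly n n) :=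
    MvPolynomial.continuous_eval _
  obtain ⟨η, hη, hball⟩ := Metric.continuousAt_iff.1 (hcont.continuousAt (x := v)) ε hε
  have hδm : ∀ m : Fin n, ∃ δ > (0 : ℝ), ∀ Y : Ω → ℝ, MemLp Y (ENNReal.ofReal (n : ℝ)) μ →
      eLpNorm (X - Y) (ENNReal.ofReal (n : ℝ)) μ < ENNReal.ofReal δ →
      |(∫ ω, X ω ^ ((m : ℕ) + 1) ∂μ) - ∫ ω, Y ω ^ ((m : ℕ) + 1) ∂μ| < η :=
    fun m => moment_continuity μ n hn ((m : ℕ) + 1) (Nat.succ_le_of_lt m.isLt) X hXn hη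
  choose δf hδf0 hδf using hδm
  have hne : (Finset.univ : Finset (Fin n)).Nonempty := ⟨⟨0, by omega⟩, Finset.mem_univ _⟩
  refine ⟨Finset.univ.inf' hne δf, ?_, fun Y hY hlt => ?_⟩
  · exact (Finset.lt_inf'_iff hne).2 fun m _ => hδf0 m
  · have hYn : MemLp Y (ENNReal.ofReal (n : ℝ)) μ := hY.mono_exponent hen
    have hmeas : AEStronglyMeasurable (X - Y) μ :=
      hX.aestronglyMeasurable.sub hY.aestronglyMeasurable
    have hlt' : ∀ m : Fin n, eLpNorm (X - Y) (ENNReal.ofReal (n : ℝ)) μ <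
        ENNReal.ofReal (δf m) := by
      intro m
      calc eLpNorm (X - Y) (ENNReal.ofReal (n : ℝ)) μ
          ≤ eLpNorm (X - Y) (ENNReal.ofReal p) μ :=
            eLpNorm_le_eLpNorm_of_exponent_le hen hmeas
        _ < ENNReal.ofReal (Finset.univ.inf' hne δf) := hlt
        _ ≤ ENNReal.ofReal (δf m) :=
            ENNReal.ofReal_le_ofReal (Finset.inf'_le _ (Finset.mem_univ m))
    set w : Fin n → ℝ := fun m => ∫ ω, Y ω ^ ((m : ℕ) + 1) ∂μ with hw
    have hdist : dist w v < η := by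
      rw [dist_pi_lt_iff hη]
      intro m
      rw [Real.dist_eq, abs_sub_comm]
      exact hδf m Y hYn (hlt' m)
    have hev := hball hdist
    rw [part1 X hX, part1 Y hY]
    rw [← Complex.ofReal_sub, Complex.norm_real]
    rw [dist_eq_norm, Real.norm_eq_abs] at hev
    simpa [abs_sub_comm] using hev
end

section
/- Let n ≥ 1 and p ≥ n. For random variables (X_1, X_2, …, X_n) on a probability space with X_i ∈ L^{p/i} for each i = 1,…,n, the random variable B_n(X_1, X_2, …, X_n) belongs to L^{p/n}. Moreover, the map L^{p} × L^{p/2} × ⋯ × L^{p/n} ∋ (X_1,…,X_n) ↦ B_n(X_1,…,X_n) ∈ L^{p/n} is continuous. -/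
open MeasureTheory Finset
open scoped ENNReal NNReal

/-- The `n`-th complete Bell polynomial, defined as the `n`-th derivative at `z = 0` of
`exp (∑_{i=1}^n x_i z^i / i!)`.  Only `x 1, …, x n` are used. -/
noncomputable def bell (n : ℕ) (x : ℕ → ℝ) : ℝ :=
  iteratedDeriv n
    (fun z : ℝ => Real.exp (∑ i ∈ Finset.range n, x (i + 1) * z ^ (i + 1) / ((i + 1).factorial : ℝ))) 0

noncomputable def bellPoly : ℕ → (ℕ → ℝ) → ℝ
  | 0, _ => 1
  | (k+1), x => ∑ j ∈ Finset.range (k+1),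
      (k.choose j : ℝ) * (x (j+1) * bellPoly (k-j) x)
  decreasing_by exact Nat.lt_succ_of_le (Nat.sub_le k j)

@[simp] lemma bellPoly_zero (x : ℕ → ℝ) : bellPoly 0 x = 1 := by simp [bellPoly]

lemma bellPoly_succ (k : ℕ) (x : ℕ → ℝ) :
    bellPoly (k+1) x = ∑ j ∈ Finset.range (k+1),
      (k.choose j : ℝ) * (x (j+1) * bellPoly (k-j) x) := by
  rw [bellPoly]

private lemma choose_shuffle (n : ℕ) (A B : ℕ → ℝ) :
    ∑ j ∈ range (n+2), ((n+1).choose j : ℝ) * (A j * B (n+1-j))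
      = ∑ j ∈ range (n+1), (n.choose j : ℝ) *
          (A (j+1) * B (n-j) + A j * B (n+1-j)) := by
  have h1 : ∑ j ∈ range (n+2), ((n+1).choose j : ℝ) * (A j * B (n+1-j))
      = (∑ j ∈ range (n+1), ((n+1).choose (j+1) : ℝ) * (A (j+1) * B (n-j)))
        + A 0 * B (n+1) := by
    rw [Finset.sum_range_succ' (fun j => ((n+1).choose j : ℝ) * (A j * B (n+1-j))) (n+1)]
    simp [Nat.succ_sub_succ]
  have h2 : (∑ j ∈ range (n+1), (n.choose (j+1) : ℝ) * (A (j+1) * B (n-j)))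
        + A 0 * B (n+1)
      = ∑ j ∈ range (n+1), (n.choose j : ℝ) * (A j * B (n+1-j)) := by
    have h3 := Finset.sum_range_succ' (fun j => (n.choose j : ℝ) * (A j * B (n+1-j))) (n+1)
    have h4 := Finset.sum_range_succ (fun j => (n.choose j : ℝ) * (A j * B (n+1-j))) (n+1)
    rw [h4, Nat.choose_succ_self] at h3
    simp only [Nat.succ_sub_succ, Nat.cast_zero, zero_mul, add_zero, Nat.choose_zero_right,
      Nat.cast_one, one_mul, Nat.sub_zero] at h3
    linarith [h3]
  calc ∑ j ∈ range (n+2), ((n+1).choose j : ℝ) * (A j * B (n+1-j))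
      = (∑ j ∈ range (n+1), (n.choose j : ℝ) * (A (j+1) * B (n-j)))
        + ((∑ j ∈ range (n+1), (n.choose (j+1) : ℝ) * (A (j+1) * B (n-j))) + A 0 * B (n+1)) := by
        rw [h1]
        have hsplit : ∀ j ∈ range (n+1), ((n+1).choose (j+1) : ℝ) * (A (j+1) * B (n-j))
            = (n.choose j : ℝ) * (A (j+1) * B (n-j))
              + (n.choose (j+1) : ℝ) * (A (j+1) * B (n-j)) := by
          intro j _; rw [Nat.choose_succ_succ]; push_cast; ring
        rw [Finset.sum_congr rfl hsplit, Finset.sum_add_distrib, add_assoc]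
    _ = _ := by
        rw [h2, ← Finset.sum_add_distrib]
        refine Finset.sum_congr rfl fun j _ => by ring

lemma iteratedDeriv_mul_apply {f g : ℝ → ℝ} (hf : ContDiff ℝ ((⊤ : ℕ∞) : WithTop ℕ∞) f) (hg : ContDiff ℝ ((⊤ : ℕ∞) : WithTop ℕ∞) g)
    (n : ℕ) (x : ℝ) :
    iteratedDeriv n (fun z => f z * g z) x
      = ∑ j ∈ range (n+1), (n.choose j : ℝ)
          * (iteratedDeriv j f x * iteratedDeriv (n-j) g x) := by
  have hdiff : ∀ (m : ℕ) (F : ℝ → ℝ), ContDiff ℝ ((⊤ : ℕ∞) : WithTop ℕ∞) F → Differentiable ℝ (iteratedDeriv m F) :=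
    fun m F hF => hF.differentiable_iteratedDeriv m
      (ENat.natCast_lt_of_coe_top_le_withTop le_rfl m)
  induction n generalizing x with
  | zero => simp
  | succ n ih =>
    have hD : ∀ (m : ℕ) (F : ℝ → ℝ) (hF : ContDiff ℝ ((⊤ : ℕ∞) : WithTop ℕ∞) F) (y : ℝ),
        HasDerivAt (iteratedDeriv m F) (iteratedDeriv (m+1) F y) y := by
      intro m F hF y
      have := (hdiff m F hF y).hasDerivAt
      rwa [show deriv (iteratedDeriv m F) y = iteratedDeriv (m+1) F y by
        rw [iteratedDeriv_succ]] at this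
    have hsum : HasDerivAt
        (fun y => ∑ j ∈ range (n+1), (n.choose j : ℝ)
          * (iteratedDeriv j f y * iteratedDeriv (n-j) g y))
        (∑ j ∈ range (n+1), (n.choose j : ℝ)
          * (iteratedDeriv (j+1) f x * iteratedDeriv (n-j) g x
             + iteratedDeriv j f x * iteratedDeriv (n-j+1) g x)) x := by
      refine HasDerivAt.fun_sum fun j _ => ?_
      exact ((hD j f hf x).mul (hD (n-j) g hg x)).const_mul _
    calc iteratedDeriv (n+1) (fun z => f z * g z) x
        = deriv (iteratedDeriv n fun z => f z * g z) x := by rw [iteratedDeriv_succ]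
      _ = deriv (fun y => ∑ j ∈ range (n+1), (n.choose j : ℝ)
            * (iteratedDeriv j f y * iteratedDeriv (n-j) g y)) x := by
          congr 1; funext y; exact ih y
      _ = ∑ j ∈ range (n+1), (n.choose j : ℝ)
            * (iteratedDeriv (j+1) f x * iteratedDeriv (n-j) g x
               + iteratedDeriv j f x * iteratedDeriv (n-j+1) g x) := hsum.deriv
      _ = _ := by
          rw [choose_shuffle n (fun j => iteratedDeriv j f x) (fun j => iteratedDeriv j g x)]
          refine Finset.sum_congr rfl fun j hj => ?_
          have hjn : j ≤ n := Nat.lt_succ_iff.mp (mem_range.mp hj)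
          rw [Nat.succ_sub hjn]

lemma iteratedDeriv_const_mul_pow (c : ℝ) (m j : ℕ) (x : ℝ) :
    iteratedDeriv j (fun z => c * z ^ m) x = c * m.descFactorial j * x ^ (m - j) := by
  induction j generalizing c m with
  | zero => simp
  | succ j ih =>
    have hd : deriv (fun z : ℝ => c * z ^ m) = fun z => (c * m) * z ^ (m-1) := by
      funext z
      have := ((hasDerivAt_pow m z).const_mul c).deriv
      rw [this]; ring
    rw [iteratedDeriv_succ', hd, ih]
    cases m with
    | zero => simp
    | succ m =>
      simp only [Nat.succ_sub_succ, Nat.sub_zero, Nat.succ_descFactorial_succ, Nat.add_sub_cancel]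
      push_cast; ring

lemma iteratedDeriv_fun_sum_aux {ι : Type*} (s : Finset ι) (F : ι → ℝ → ℝ) (j : ℕ)
    (h : ∀ i ∈ s, ContDiff ℝ ((⊤ : ℕ∞) : WithTop ℕ∞) (F i)) (x : ℝ) :
    iteratedDeriv j (fun z => ∑ i ∈ s, F i z) x = ∑ i ∈ s, iteratedDeriv j (F i) x := by
  simp only [iteratedDeriv_eq_iteratedFDeriv]
  rw [iteratedFDeriv_sum (fun i hi => (h i hi).of_le
    (ENat.natCast_le_of_coe_top_le_withTop le_rfl j))]
  simp

lemma bell_eq_bellPoly (n : ℕ) (x : ℕ → ℝ) : bell n x = bellPoly n x := by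
  set g : ℝ → ℝ := fun z => ∑ i ∈ range n, (x (i+1) / ((i+1).factorial : ℝ)) * z^(i+1)
    with hgdef
  set f : ℝ → ℝ := fun z => Real.exp (g z) with hfdef
  have hbell : bell n x = iteratedDeriv n f 0 := by
    unfold bell
    congr 1
    funext z
    simp only [hfdef, hgdef]
    congr 1
    exact Finset.sum_congr rfl fun i _ => by ring
  set g' : ℝ → ℝ := fun z => ∑ i ∈ range n, (x (i+1) / (i.factorial : ℝ)) * z^i with hg'def
  have hgc : ContDiff ℝ ((⊤ : ℕ∞) : WithTop ℕ∞) g := ContDiff.sum fun i _ => contDiff_const.mul (contDiff_id.pow _)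
  have hg'c : ContDiff ℝ ((⊤ : ℕ∞) : WithTop ℕ∞) g' := ContDiff.sum fun i _ => contDiff_const.mul (contDiff_id.pow _)
  have hfc : ContDiff ℝ ((⊤ : ℕ∞) : WithTop ℕ∞) f := Real.contDiff_exp.comp hgc
  have hgd : ∀ z, HasDerivAt g (g' z) z := by
    intro z
    have h1 : HasDerivAt g
        (∑ i ∈ range n, (x (i+1) / ((i+1).factorial : ℝ)) * (((i:ℝ)+1) * z^i)) z := by
      refine HasDerivAt.fun_sum fun i _ => ?_
      have h := (hasDerivAt_pow (i+1) z).const_mul (x (i+1) / ((i+1).factorial : ℝ))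
      simpa using h
    convert h1 using 1
    refine Finset.sum_congr rfl fun i _ => ?_
    have h0 : (i.factorial : ℝ) ≠ 0 := Nat.cast_ne_zero.mpr i.factorial_ne_zero
    rw [Nat.factorial_succ]
    push_cast
    field_simp
  have hf' : deriv f = fun z => g' z * f z := by
    funext z
    rw [((hgd z).exp).deriv]
    simp only [hfdef]
    ring
  have hg'0 : ∀ j, j < n → iteratedDeriv j g' 0 = x (j+1) := by
    intro j hj
    rw [hg'def]
    rw [iteratedDeriv_fun_sum_aux (range n) (fun i z => (x (i+1) / (i.factorial : ℝ)) * z^i) j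
      (fun i _ => contDiff_const.mul (contDiff_id.pow _)) 0]
    rw [Finset.sum_eq_single j]
    · rw [iteratedDeriv_const_mul_pow, Nat.descFactorial_self, Nat.sub_self, pow_zero]
      field_simp
    · intro i _ hij
      rw [iteratedDeriv_const_mul_pow]
      rcases lt_or_gt_of_ne hij with h | h
      · rw [Nat.descFactorial_eq_zero_iff_lt.mpr h]; simp
      · rw [zero_pow (Nat.sub_ne_zero_of_lt h)]; ring
    · intro hcon; exact absurd (mem_range.mpr hj) hcon
  have hrec : ∀ k, k < n → iteratedDeriv (k+1) f 0
      = ∑ j ∈ range (k+1), (k.choose j : ℝ) * (x (j+1) * iteratedDeriv (k-j) f 0) := by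
    intro k hk
    rw [iteratedDeriv_succ', hf', iteratedDeriv_mul_apply hg'c hfc k 0]
    refine Finset.sum_congr rfl fun j hj => ?_
    have hjk : j ≤ k := Nat.lt_succ_iff.mp (mem_range.mp hj)
    rw [hg'0 j (lt_of_le_of_lt hjk hk)]
  have hzero : iteratedDeriv 0 f 0 = 1 := by
    simp [hfdef, hgdef]
  have key : ∀ k, k ≤ n → iteratedDeriv k f 0 = bellPoly k x := by
    intro k
    induction k using Nat.strong_induction_on with
    | _ k ih =>
      intro hk
      obtain _ | k := k
      · simpa using hzero
      · rw [hrec k (by omega), bellPoly_succ]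
        refine Finset.sum_congr rfl fun j hj => ?_
        rw [ih (k-j) (Nat.lt_succ_of_le (Nat.sub_le k j)) (by omega)]
  rw [hbell]
  exact key n le_rfl

noncomputable def pexp (p : ℝ) (k : ℕ) : ℝ≥0∞ := if k = 0 then ⊤ else ENNReal.ofReal (p / k)

lemma pexp_eq {p : ℝ} {k : ℕ} (hk : k ≠ 0) : pexp p k = ENNReal.ofReal (p / k) := if_neg hk

lemma pexp_holder {p : ℝ} (hp : 0 < p) (a b : ℕ) (ha : a ≠ 0) :
    1 / pexp p (a + b) = 1 / pexp p a + 1 / pexp p b := by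
  have key : ∀ c : ℕ, c ≠ 0 → 1 / pexp p c = ENNReal.ofReal (c / p) := by
    intro c hc
    have hc' : (0:ℝ) < c := by exact_mod_cast Nat.pos_of_ne_zero hc
    rw [pexp_eq hc, one_div, ← ENNReal.ofReal_inv_of_pos (div_pos hp hc'), inv_div]
  rcases Nat.eq_zero_or_pos b with rfl | hb
  · simp [pexp]
  · have hb' : b ≠ 0 := hb.ne'
    rw [key a ha, key b hb', key (a+b) (by omega),
      ← ENNReal.ofReal_add (by positivity) (by positivity)]
    congr 1
    push_cast
    rw [← add_div]

lemma one_le_pexp {p : ℝ} {n k : ℕ} (hp : (n:ℝ) ≤ p) (hk : 1 ≤ k) (hkn : k ≤ n) :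
    1 ≤ pexp p k := by
  rw [pexp_eq (by omega), ENNReal.one_le_ofReal]
  have hk' : (0:ℝ) < k := by exact_mod_cast hk
  rw [le_div_iff₀ hk']
  have h1 : (k:ℝ) ≤ n := by exact_mod_cast hkn
  linarith

section
variable {Ω : Type*} [MeasurableSpace Ω] {μ : Measure Ω} [IsProbabilityMeasure μ]
variable {n : ℕ} {p : ℝ}

lemma bellPoly_memLp (hn : 1 ≤ n) (hp : (n:ℝ) ≤ p) (Z : ℕ → Ω → ℝ)
    (hZ : ∀ i, 1 ≤ i → i ≤ n → MemLp (Z i) (pexp p i) μ) :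
    ∀ k, k ≤ n → MemLp (fun ω => bellPoly k fun i => Z i ω) (pexp p k) μ := by
  have hp0 : (0:ℝ) < p := lt_of_lt_of_le (by exact_mod_cast hn) hp
  intro k
  induction k using Nat.strong_induction_on with
  | _ k ih =>
    intro hk
    obtain _ | k := k
    · have h0 : (fun ω => bellPoly 0 fun i => Z i ω) = fun _ : Ω => (1:ℝ) := by
        funext ω; simp
      rw [h0]; exact memLp_const 1
    · have heq : (fun ω => bellPoly (k+1) fun i => Z i ω)
          = fun ω => ∑ j ∈ range (k+1),
              (k.choose j : ℝ) * (Z (j+1) ω * bellPoly (k-j) fun i => Z i ω) := by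
        funext ω; rw [bellPoly_succ]
      rw [heq]
      apply memLp_finset_sum
      intro j hj
      have hjk : j ≤ k := Nat.lt_succ_iff.mp (mem_range.mp hj)
      apply MemLp.const_mul
      have h1 : MemLp (Z (j+1)) (pexp p (j+1)) μ := hZ _ (by omega) (by omega)
      have h2 : MemLp (fun ω => bellPoly (k-j) fun i => Z i ω) (pexp p (k-j)) μ :=
        ih (k-j) (Nat.lt_succ_of_le (Nat.sub_le k j)) (by omega)
      have h3 : 1 / pexp p (k+1) = 1 / pexp p (j+1) + 1 / pexp p (k-j) := by
        have h4 := pexp_holder hp0 (j+1) (k-j) (by omega)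
        rwa [show j+1+(k-j) = k+1 by omega] at h4
      exact h2.smul h1 (hpqr := ⟨by simpa only [one_div] using h3.symm⟩)

lemma bellPoly_bound (hn : 1 ≤ n) (hp : (n:ℝ) ≤ p) (X : ℕ → Ω → ℝ)
    (hX : ∀ i, 1 ≤ i → i ≤ n → MemLp (X i) (pexp p i) μ) :
    ∀ k, k ≤ n → ∃ M L : ℝ≥0∞, M ≠ ⊤ ∧ L ≠ ⊤ ∧
      ∀ Y : ℕ → Ω → ℝ, (∀ i, 1 ≤ i → i ≤ n → MemLp (Y i) (pexp p i) μ) →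
        (∀ i, 1 ≤ i → i ≤ n →
          eLpNorm (Y i) (pexp p i) μ ≤ eLpNorm (X i) (pexp p i) μ + 1) →
        eLpNorm (fun ω => bellPoly k fun i => Y i ω) (pexp p k) μ ≤ M ∧
        ∀ d : ℝ≥0∞, (∀ i, 1 ≤ i → i ≤ n → eLpNorm (X i - Y i) (pexp p i) μ ≤ d) →
          eLpNorm ((fun ω => bellPoly k fun i => X i ω) - fun ω => bellPoly k fun i => Y i ω)
            (pexp p k) μ ≤ L * d := by
  have hp0 : (0:ℝ) < p := lt_of_lt_of_le (by exact_mod_cast hn) hp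
  intro k
  induction k using Nat.strong_induction_on with
  | _ k ih =>
    intro hk
    obtain _ | k := k
    · refine ⟨1, 1, ENNReal.one_ne_top, ENNReal.one_ne_top, fun Y hY hYb => ⟨?_, fun d hd => ?_⟩⟩
      · have h0 : (fun ω => bellPoly 0 fun i => Y i ω) = fun _ : Ω => (1:ℝ) := by
          funext ω; simp
        rw [h0, show pexp p 0 = ⊤ from rfl, eLpNorm_exponent_top,
          eLpNormEssSup_const _ (IsProbabilityMeasure.ne_zero μ)]
        simp
      · have h0 : ((fun ω => bellPoly 0 fun i => X i ω) - fun ω => bellPoly 0 fun i => Y i ω)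
            = (0 : Ω → ℝ) := by
          funext ω; simp
        rw [h0, eLpNorm_zero]
        exact zero_le
    · have hkn : k ≤ n := by omega
      have pf1 : ∀ j : ℕ, k - j < k + 1 := fun j => Nat.lt_succ_of_le (Nat.sub_le k j)
      have pf2 : ∀ j : ℕ, k - j ≤ n := fun j => le_trans (Nat.sub_le k j) hkn
      choose Mf Lf hIH using ih
      set C : ℕ → ℝ≥0∞ := fun i => eLpNorm (X i) (pexp p i) μ + 1 with hCdef
      have hCne : ∀ i, 1 ≤ i → i ≤ n → C i ≠ ⊤ := fun i h1 h2 =>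
        ENNReal.add_ne_top.mpr ⟨(hX i h1 h2).eLpNorm_ne_top, ENNReal.one_ne_top⟩
      have hE1 : (1:ℝ≥0∞) ≤ pexp p (k+1) := one_le_pexp hp (by omega) hk
      have h3 : ∀ j, j ≤ k → 1 / pexp p (k+1) = 1 / pexp p (j+1) + 1 / pexp p (k-j) := by
        intro j hj
        have h4 := pexp_holder hp0 (j+1) (k-j) (by omega)
        rwa [show j+1+(k-j) = k+1 by omega] at h4
      refine ⟨∑ j ∈ range (k+1), (‖(k.choose j : ℝ)‖₊ : ℝ≥0∞)
                * (C (j+1) * Mf (k-j) (pf1 j) (pf2 j)),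
              ∑ j ∈ range (k+1), (‖(k.choose j : ℝ)‖₊ : ℝ≥0∞)
                * (C (j+1) * Lf (k-j) (pf1 j) (pf2 j) + Mf (k-j) (pf1 j) (pf2 j)),
              ?_, ?_, ?_⟩
      · refine ENNReal.sum_ne_top.mpr fun j hj => ?_
        have hjk : j ≤ k := Nat.lt_succ_iff.mp (mem_range.mp hj)
        exact ENNReal.mul_ne_top ENNReal.coe_ne_top
          (ENNReal.mul_ne_top (hCne (j+1) (by omega) (by omega))
            (hIH (k-j) (pf1 j) (pf2 j)).1)
      · refine ENNReal.sum_ne_top.mpr fun j hj => ?_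
        have hjk : j ≤ k := Nat.lt_succ_iff.mp (mem_range.mp hj)
        exact ENNReal.mul_ne_top ENNReal.coe_ne_top
          (ENNReal.add_ne_top.mpr ⟨ENNReal.mul_ne_top (hCne (j+1) (by omega) (by omega))
            (hIH (k-j) (pf1 j) (pf2 j)).2.1, (hIH (k-j) (pf1 j) (pf2 j)).1⟩)
      intro Y hY hYb
      have hQmem : ∀ m, m ≤ n → MemLp (fun ω => bellPoly m fun i => Y i ω) (pexp p m) μ :=
        bellPoly_memLp hn hp Y hY
      have hPmem : ∀ m, m ≤ n → MemLp (fun ω => bellPoly m fun i => X i ω) (pexp p m) μ :=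
        bellPoly_memLp hn hp X hX
      constructor
      · -- the norm bound
        have heq : (fun ω => bellPoly (k+1) fun i => Y i ω)
            = ∑ j ∈ range (k+1),
                fun ω => (k.choose j : ℝ) * (Y (j+1) ω * bellPoly (k-j) fun i => Y i ω) := by
          funext ω
          rw [bellPoly_succ]
          simp
        rw [heq]
        have hmeas : ∀ j ∈ range (k+1), AEStronglyMeasurable
            (fun ω => (k.choose j : ℝ) * (Y (j+1) ω * bellPoly (k-j) fun i => Y i ω)) μ := by
          intro j hj
          have hjk : j ≤ k := Nat.lt_succ_iff.mp (mem_range.mp hj)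
          exact (MemLp.const_mul ((hQmem (k-j) (pf2 j)).smul
            (hY (j+1) (by omega) (by omega)) (hpqr := ⟨by simpa only [one_div] using (h3 j hjk).symm⟩)) _).1
        refine le_trans (eLpNorm_sum_le hmeas hE1) (Finset.sum_le_sum fun j hj => ?_)
        have hjk : j ≤ k := Nat.lt_succ_iff.mp (mem_range.mp hj)
        calc eLpNorm (fun ω => (k.choose j : ℝ)
                * (Y (j+1) ω * bellPoly (k-j) fun i => Y i ω)) (pexp p (k+1)) μ
            = eLpNorm ((k.choose j : ℝ) •
                (Y (j+1) • fun ω => bellPoly (k-j) fun i => Y i ω)) (pexp p (k+1)) μ := rfl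
          _ ≤ (‖(k.choose j : ℝ)‖₊ : ℝ≥0∞) *
                eLpNorm (Y (j+1) • fun ω => bellPoly (k-j) fun i => Y i ω) (pexp p (k+1)) μ := by
              have := eLpNorm_const_smul_le (c := (k.choose j : ℝ))
                (f := Y (j+1) • fun ω => bellPoly (k-j) fun i => Y i ω)
                (p := pexp p (k+1)) (μ := μ)
              exact this
          _ ≤ (‖(k.choose j : ℝ)‖₊ : ℝ≥0∞) *
                (eLpNorm (Y (j+1)) (pexp p (j+1)) μ *
                 eLpNorm (fun ω => bellPoly (k-j) fun i => Y i ω) (pexp p (k-j)) μ) :=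
              mul_le_mul_right (eLpNorm_smul_le_mul_eLpNorm
                (hQmem (k-j) (pf2 j)).1 (hY (j+1) (by omega) (by omega)).1 (hpqr := ⟨by simpa only [one_div] using (h3 j hjk).symm⟩)) _
          _ ≤ (‖(k.choose j : ℝ)‖₊ : ℝ≥0∞) * (C (j+1) * Mf (k-j) (pf1 j) (pf2 j)) :=
              mul_le_mul_right (mul_le_mul' (hYb (j+1) (by omega) (by omega))
                ((hIH (k-j) (pf1 j) (pf2 j)).2.2 Y hY hYb).1) _
      · -- the difference bound
        intro d hd
        have heqd : ((fun ω => bellPoly (k+1) fun i => X i ω)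
              - fun ω => bellPoly (k+1) fun i => Y i ω)
            = ∑ j ∈ range (k+1), (fun ω =>
                (k.choose j : ℝ) * (X (j+1) ω *
                  ((bellPoly (k-j) fun i => X i ω) - bellPoly (k-j) fun i => Y i ω))
                + (k.choose j : ℝ) * ((X (j+1) ω - Y (j+1) ω)
                    * bellPoly (k-j) fun i => Y i ω)) := by
          funext ω
          simp only [Pi.sub_apply, Finset.sum_apply]
          rw [bellPoly_succ, bellPoly_succ, ← Finset.sum_sub_distrib]
          exact Finset.sum_congr rfl fun j hj => by ring
        have hmem1 : ∀ j, j ≤ k → MemLp (fun ω => (k.choose j : ℝ) * (X (j+1) ω *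
              ((bellPoly (k-j) fun i => X i ω) - bellPoly (k-j) fun i => Y i ω)))
              (pexp p (k+1)) μ := by
          intro j hjk
          exact MemLp.const_mul (((hPmem (k-j) (pf2 j)).sub (hQmem (k-j) (pf2 j))).smul
            (hX (j+1) (by omega) (by omega)) (hpqr := ⟨by simpa only [one_div] using (h3 j hjk).symm⟩)) _
        have hmem2 : ∀ j, j ≤ k → MemLp (fun ω => (k.choose j : ℝ) *
              ((X (j+1) ω - Y (j+1) ω) * bellPoly (k-j) fun i => Y i ω))
              (pexp p (k+1)) μ := by
          intro j hjk
          exact MemLp.const_mul ((hQmem (k-j) (pf2 j)).smul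
            ((hX (j+1) (by omega) (by omega)).sub (hY (j+1) (by omega) (by omega)))
            (hpqr := ⟨by simpa only [one_div] using (h3 j hjk).symm⟩)) _
        rw [heqd]
        have hmeas : ∀ j ∈ range (k+1), AEStronglyMeasurable
            (fun ω =>
                (k.choose j : ℝ) * (X (j+1) ω *
                  ((bellPoly (k-j) fun i => X i ω) - bellPoly (k-j) fun i => Y i ω))
                + (k.choose j : ℝ) * ((X (j+1) ω - Y (j+1) ω)
                    * bellPoly (k-j) fun i => Y i ω)) μ := by
          intro j hj
          have hjk : j ≤ k := Nat.lt_succ_iff.mp (mem_range.mp hj)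
          exact ((hmem1 j hjk).add (hmem2 j hjk)).1
        refine le_trans (eLpNorm_sum_le hmeas hE1) ?_
        have hperterm : ∀ j ∈ range (k+1),
            eLpNorm (fun ω =>
                (k.choose j : ℝ) * (X (j+1) ω *
                  ((bellPoly (k-j) fun i => X i ω) - bellPoly (k-j) fun i => Y i ω))
                + (k.choose j : ℝ) * ((X (j+1) ω - Y (j+1) ω)
                    * bellPoly (k-j) fun i => Y i ω)) (pexp p (k+1)) μ
            ≤ ((‖(k.choose j : ℝ)‖₊ : ℝ≥0∞)
                * (C (j+1) * Lf (k-j) (pf1 j) (pf2 j) + Mf (k-j) (pf1 j) (pf2 j))) * d := by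
          intro j hj
          have hjk : j ≤ k := Nat.lt_succ_iff.mp (mem_range.mp hj)
          have step1 : eLpNorm (fun ω => (k.choose j : ℝ) * (X (j+1) ω *
                ((bellPoly (k-j) fun i => X i ω) - bellPoly (k-j) fun i => Y i ω)))
                (pexp p (k+1)) μ
              ≤ (‖(k.choose j : ℝ)‖₊ : ℝ≥0∞) *
                  (C (j+1) * (Lf (k-j) (pf1 j) (pf2 j) * d)) := by
            calc eLpNorm (fun ω => (k.choose j : ℝ) * (X (j+1) ω *
                  ((bellPoly (k-j) fun i => X i ω) - bellPoly (k-j) fun i => Y i ω)))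
                  (pexp p (k+1)) μ
                = eLpNorm ((k.choose j : ℝ) • (X (j+1) •
                    ((fun ω => bellPoly (k-j) fun i => X i ω)
                      - fun ω => bellPoly (k-j) fun i => Y i ω))) (pexp p (k+1)) μ := rfl
              _ ≤ (‖(k.choose j : ℝ)‖₊ : ℝ≥0∞) * eLpNorm (X (j+1) •
                    ((fun ω => bellPoly (k-j) fun i => X i ω)
                      - fun ω => bellPoly (k-j) fun i => Y i ω)) (pexp p (k+1)) μ := by
                  have := eLpNorm_const_smul_le (c := (k.choose j : ℝ))
                    (f := X (j+1) • ((fun ω => bellPoly (k-j) fun i => X i ω)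
                      - fun ω => bellPoly (k-j) fun i => Y i ω))
                    (p := pexp p (k+1)) (μ := μ)
                  exact this
              _ ≤ (‖(k.choose j : ℝ)‖₊ : ℝ≥0∞) *
                    (eLpNorm (X (j+1)) (pexp p (j+1)) μ *
                     eLpNorm ((fun ω => bellPoly (k-j) fun i => X i ω)
                      - fun ω => bellPoly (k-j) fun i => Y i ω) (pexp p (k-j)) μ) :=
                  mul_le_mul_right (eLpNorm_smul_le_mul_eLpNorm
                    ((hPmem (k-j) (pf2 j)).sub (hQmem (k-j) (pf2 j))).1
                    (hX (j+1) (by omega) (by omega)).1 (hpqr := ⟨by simpa only [one_div] using (h3 j hjk).symm⟩)) _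
              _ ≤ (‖(k.choose j : ℝ)‖₊ : ℝ≥0∞) *
                    (C (j+1) * (Lf (k-j) (pf1 j) (pf2 j) * d)) :=
                  mul_le_mul_right (mul_le_mul' (self_le_add_right _ _)
                    (((hIH (k-j) (pf1 j) (pf2 j)).2.2 Y hY hYb).2 d hd)) _
          have step2 : eLpNorm (fun ω => (k.choose j : ℝ) * ((X (j+1) ω - Y (j+1) ω)
                * bellPoly (k-j) fun i => Y i ω)) (pexp p (k+1)) μ
              ≤ (‖(k.choose j : ℝ)‖₊ : ℝ≥0∞) * (d * Mf (k-j) (pf1 j) (pf2 j)) := by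
            calc eLpNorm (fun ω => (k.choose j : ℝ) * ((X (j+1) ω - Y (j+1) ω)
                  * bellPoly (k-j) fun i => Y i ω)) (pexp p (k+1)) μ
                = eLpNorm ((k.choose j : ℝ) • ((X (j+1) - Y (j+1)) •
                    fun ω => bellPoly (k-j) fun i => Y i ω)) (pexp p (k+1)) μ := rfl
              _ ≤ (‖(k.choose j : ℝ)‖₊ : ℝ≥0∞) * eLpNorm ((X (j+1) - Y (j+1)) •
                    fun ω => bellPoly (k-j) fun i => Y i ω) (pexp p (k+1)) μ := by
                  have := eLpNorm_const_smul_le (c := (k.choose j : ℝ))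
                    (f := (X (j+1) - Y (j+1)) • fun ω => bellPoly (k-j) fun i => Y i ω)
                    (p := pexp p (k+1)) (μ := μ)
                  exact this
              _ ≤ (‖(k.choose j : ℝ)‖₊ : ℝ≥0∞) *
                    (eLpNorm (X (j+1) - Y (j+1)) (pexp p (j+1)) μ *
                     eLpNorm (fun ω => bellPoly (k-j) fun i => Y i ω) (pexp p (k-j)) μ) :=
                  mul_le_mul_right (eLpNorm_smul_le_mul_eLpNorm
                    (hQmem (k-j) (pf2 j)).1
                    ((hX (j+1) (by omega) (by omega)).sub
                      (hY (j+1) (by omega) (by omega))).1 (hpqr := ⟨by simpa only [one_div] using (h3 j hjk).symm⟩)) _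
              _ ≤ (‖(k.choose j : ℝ)‖₊ : ℝ≥0∞) * (d * Mf (k-j) (pf1 j) (pf2 j)) :=
                  mul_le_mul_right (mul_le_mul' (hd (j+1) (by omega) (by omega))
                    ((hIH (k-j) (pf1 j) (pf2 j)).2.2 Y hY hYb).1) _
          calc eLpNorm _ (pexp p (k+1)) μ
              ≤ _ + _ := eLpNorm_add_le (hmem1 j hjk).1 (hmem2 j hjk).1 hE1
            _ ≤ (‖(k.choose j : ℝ)‖₊ : ℝ≥0∞) * (C (j+1) * (Lf (k-j) (pf1 j) (pf2 j) * d))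
                + (‖(k.choose j : ℝ)‖₊ : ℝ≥0∞) * (d * Mf (k-j) (pf1 j) (pf2 j)) :=
                add_le_add step1 step2
            _ = ((‖(k.choose j : ℝ)‖₊ : ℝ≥0∞)
                * (C (j+1) * Lf (k-j) (pf1 j) (pf2 j) + Mf (k-j) (pf1 j) (pf2 j))) * d := by
                ring
        refine le_trans (Finset.sum_le_sum hperterm) (le_of_eq ?_)
        rw [Finset.sum_mul]

end

/-- Lemma 1: if `X_i ∈ L^{p/i}` for `i = 1,…,n` (with `p ≥ n`) then
`B_n(X_1,…,X_n) ∈ L^{p/n}`, and the map `(X_1,…,X_n) ↦ B_n(X_1,…,X_n)` is continuous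
from `L^p × L^{p/2} × ⋯ × L^{p/n}` to `L^{p/n}`. -/
theorem bell_memLp_continuous {Ω : Type*} [MeasurableSpace Ω] (μ : Measure Ω)
    [IsProbabilityMeasure μ] (n : ℕ) (hn : 1 ≤ n) (p : ℝ) (hp : (n : ℝ) ≤ p)
    (X : ℕ → Ω → ℝ) (hX : ∀ i, 1 ≤ i → i ≤ n → MemLp (X i) (ENNReal.ofReal (p / i)) μ) :
    MemLp (fun ω => bell n fun i => X i ω) (ENNReal.ofReal (p / n)) μ ∧
    ∀ ε > (0 : ℝ), ∃ δ > (0 : ℝ), ∀ Y : ℕ → Ω → ℝ,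
      (∀ i, 1 ≤ i → i ≤ n → MemLp (Y i) (ENNReal.ofReal (p / i)) μ) →
      (∀ i, 1 ≤ i → i ≤ n →
        eLpNorm (X i - Y i) (ENNReal.ofReal (p / i)) μ < ENNReal.ofReal δ) →
      eLpNorm ((fun ω => bell n fun i => X i ω) - fun ω => bell n fun i => Y i ω)
        (ENNReal.ofReal (p / n)) μ < ENNReal.ofReal ε := by
  have hp0 : (0:ℝ) < p := lt_of_lt_of_le (by exact_mod_cast hn) hp
  have hX' : ∀ i, 1 ≤ i → i ≤ n → MemLp (X i) (pexp p i) μ := by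
    intro i h1 h2; rw [pexp_eq (by omega)]; exact hX i h1 h2
  have hpn : ENNReal.ofReal (p / n) = pexp p n := (pexp_eq (by omega)).symm
  constructor
  · rw [hpn]
    have h := bellPoly_memLp hn hp X hX' n le_rfl
    simp only [bell_eq_bellPoly]
    exact h
  · intro ε hε
    obtain ⟨M, L, hM, hL, hmain⟩ := bellPoly_bound hn hp X hX' n le_rfl
    set δ : ℝ := min 1 ((ε/2) / (L.toReal + 1)) with hδdef
    have hLt : (0:ℝ) ≤ L.toReal := ENNReal.toReal_nonneg
    have hδpos : 0 < δ := lt_min one_pos (by positivity)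
    refine ⟨δ, hδpos, fun Y hYmem hYclose => ?_⟩
    have hY' : ∀ i, 1 ≤ i → i ≤ n → MemLp (Y i) (pexp p i) μ := by
      intro i h1 h2; rw [pexp_eq (by omega)]; exact hYmem i h1 h2
    have hclose' : ∀ i, 1 ≤ i → i ≤ n →
        eLpNorm (X i - Y i) (pexp p i) μ ≤ ENNReal.ofReal δ := by
      intro i h1 h2; rw [pexp_eq (by omega)]; exact le_of_lt (hYclose i h1 h2)
    have hYb : ∀ i, 1 ≤ i → i ≤ n →
        eLpNorm (Y i) (pexp p i) μ ≤ eLpNorm (X i) (pexp p i) μ + 1 := by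
      intro i h1 h2
      have hEi : (1:ℝ≥0∞) ≤ pexp p i := one_le_pexp hp h1 h2
      calc eLpNorm (Y i) (pexp p i) μ
          = eLpNorm (X i - (X i - Y i)) (pexp p i) μ := by rw [sub_sub_cancel]
        _ ≤ eLpNorm (X i) (pexp p i) μ + eLpNorm (X i - Y i) (pexp p i) μ :=
            eLpNorm_sub_le (hX' i h1 h2).1 ((hX' i h1 h2).1.sub (hY' i h1 h2).1) hEi
        _ ≤ eLpNorm (X i) (pexp p i) μ + 1 := by
            refine add_le_add le_rfl (le_trans (hclose' i h1 h2) ?_)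
            rw [← ENNReal.ofReal_one]
            exact ENNReal.ofReal_le_ofReal (min_le_left _ _)
    have hdiff := (hmain Y hY' hYb).2 (ENNReal.ofReal δ) hclose'
    rw [hpn]
    simp only [bell_eq_bellPoly]
    refine lt_of_le_of_lt hdiff ?_
    calc L * ENNReal.ofReal δ
        ≤ ENNReal.ofReal L.toReal * ENNReal.ofReal δ := by rw [ENNReal.ofReal_toReal hL]
      _ = ENNReal.ofReal (L.toReal * δ) := (ENNReal.ofReal_mul hLt).symm
      _ ≤ ENNReal.ofReal (ε/2) := by
          apply ENNReal.ofReal_le_ofReal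
          calc L.toReal * δ ≤ L.toReal * ((ε/2)/(L.toReal+1)) :=
                 mul_le_mul_of_nonneg_left (min_le_right _ _) hLt
            _ = (L.toReal/(L.toReal+1)) * (ε/2) := by ring
            _ ≤ 1 * (ε/2) := by
                have h1 : L.toReal/(L.toReal+1) ≤ 1 := by
                  rw [div_le_one (by positivity)]; linarith
                exact mul_le_mul_of_nonneg_right h1 (by positivity)
            _ = ε/2 := one_mul _
      _ < ENNReal.ofReal ε := by
          rw [ENNReal.ofReal_lt_ofReal_iff hε]
          linarith
end

section
/- Let (Ω,ℱ,P,{ℱ_t}_{t∈[0,T]}) be a filtered probability space satisfying the usual conditions, let p ≥ 2 and X ∈ L^p, and for each positive integer i ≤ p let X^{(i)}_t denote the i-th conditional cumulant of X given ℱ_t, defined recursively by X^{(1)}_t = E[X|ℱ_t] and X^{(n)}_t = E[X^n|ℱ_t] − B_n(X^{(1)}_t,…,X^{(n−1)}_t, 0) for n ≥ 2. Then for every positive integer n ≤ p and all 0 ≤ t ≤ u ≤ T, almost surely E[B_n(X^{(1)}_u − X^{(1)}_t, …, X^{(n)}_u − X^{(n)}_t) | ℱ_t] = 0. -/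
open MeasureTheory Finset Polynomial Filter Topology
open scoped ENNReal NNReal

noncomputable def belP : ℕ → Polynomial ℝ → Polynomial ℝ

  | 0, _ => 1
  | (j+1), r => (belP j r).derivative + belP j r * r.derivative

lemma coeff_mul_deriv_zero (q r : Polynomial ℝ) (m i : ℕ) (hr : ∀ i, i < m → r.coeff i = 0)
    (hi : i + 1 < m) : (q * r.derivative).coeff i = 0 := by
  rw [coeff_mul]
  refine Finset.sum_eq_zero fun x hx => ?_
  rw [Finset.HasAntidiagonal.mem_antidiagonal] at hx
  have hx2 : x.2 + 1 < m := by omega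
  rw [coeff_derivative, hr _ (by omega)]
  ring

lemma belP_coeff_eq_zero (r : Polynomial ℝ) (m : ℕ) (hr : ∀ i, i < m → r.coeff i = 0) :
    ∀ j i : ℕ, 1 ≤ j → i + j < m → (belP j r).coeff i = 0 := by
  intro j
  induction j with
  | zero => omega
  | succ j ih =>
    intro i _ him
    match j, ih with
    | 0, _ =>
      show ((belP 0 r).derivative + belP 0 r * r.derivative).coeff i = 0
      have : belP 0 r = 1 := rfl
      rw [this]
      simp only [derivative_one, one_mul, coeff_add, coeff_zero, zero_add]
      rw [coeff_derivative, hr _ (by omega)]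
      ring
    | (j'+1), ih =>
      show ((belP (j'+1) r).derivative + belP (j'+1) r * r.derivative).coeff i = 0
      rw [coeff_add, coeff_derivative, ih (i+1) (by omega) (by omega),
        coeff_mul_deriv_zero _ _ m i hr (by omega)]
      ring

lemma belP_coeff_top (r : Polynomial ℝ) (m : ℕ) (hr : ∀ i, i < m → r.coeff i = 0) :
    ∀ j : ℕ, 1 ≤ j → j ≤ m → (belP j r).coeff (m - j) = (m.descFactorial j : ℝ) * r.coeff m := by
  intro j
  induction j with
  | zero => omega
  | succ j ih =>
    intro _ hjm
    match j, ih with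
    | 0, _ =>
      show ((belP 0 r).derivative + belP 0 r * r.derivative).coeff (m-1) = _
      have h0 : belP 0 r = 1 := rfl
      rw [h0]
      simp only [derivative_one, one_mul, coeff_add, coeff_zero, zero_add]
      rw [coeff_derivative]
      have : m - 1 + 1 = m := by omega
      rw [this]
      have h4 : ((m-1 : ℕ) : ℝ) + 1 = (m : ℝ) := by
        have h5 : m - 1 + 1 = m := by omega
        exact_mod_cast congrArg (Nat.cast : ℕ → ℝ) h5
      rw [h4, Nat.descFactorial_one]
      ring
    | (j'+1), ih =>
      show ((belP (j'+1) r).derivative + belP (j'+1) r * r.derivative).coeff (m-(j'+2)) = _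
      rw [coeff_add, coeff_derivative,
        coeff_mul_deriv_zero _ _ m _ hr (by omega)]
      have h1 : m - (j'+2) + 1 = m - (j'+1) := by omega
      rw [h1, ih (by omega) (by omega)]
      have h2 : (m.descFactorial (j'+2) : ℝ) = (m - (j'+1) : ℕ) * (m.descFactorial (j'+1)) := by
        rw [Nat.descFactorial_succ]
        push_cast
        ring
      rw [h2]
      have h3 : ((m - (j'+2) : ℕ) + 1 : ℝ) = ((m - (j'+1) : ℕ) : ℝ) := by
        have : m - (j'+2) + 1 = m - (j'+1) := by omega
        exact_mod_cast congrArg (Nat.cast : ℕ → ℝ) this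
      rw [h3]
      ring

lemma belP_eval_zero_of_lt (r : Polynomial ℝ) (m j : ℕ) (hr : ∀ i, i < m → r.coeff i = 0)
    (hj : j < m) : (belP j r).eval 0 = if j = 0 then 1 else 0 := by
  rw [← coeff_zero_eq_eval_zero]
  rcases Nat.eq_zero_or_pos j with h | h
  · subst h; simp [belP]
  · rw [belP_coeff_eq_zero r m hr j 0 h (by omega), if_neg (by omega)]

lemma belP_eval_zero_top (r : Polynomial ℝ) (m : ℕ) (hr : ∀ i, i < m → r.coeff i = 0)
    (hm : 1 ≤ m) : (belP m r).eval 0 = (m.factorial : ℝ) * r.coeff m := by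
  rw [← coeff_zero_eq_eval_zero]
  have := belP_coeff_top r m hr m hm le_rfl
  rw [Nat.sub_self] at this
  rw [this, Nat.descFactorial_self]

lemma belP_succ (j : ℕ) (r : Polynomial ℝ) :
    belP (j+1) r = (belP j r).derivative + belP j r * r.derivative := rfl

lemma belP_add (r s : Polynomial ℝ) : ∀ n : ℕ,
    belP n (r + s) = ∑ k ∈ range (n+1),
      C ((n.choose k : ℕ) : ℝ) * (belP k r * belP (n-k) s) := by
  intro n
  induction n with
  | zero => simp [belP]
  | succ n ih =>
    rw [belP_succ, ih]
    have key : ∀ k ∈ range (n+1),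
        (C ((n.choose k : ℕ) : ℝ) * (belP k r * belP (n-k) s)).derivative
          + C ((n.choose k : ℕ) : ℝ) * (belP k r * belP (n-k) s) * (r+s).derivative
        = C ((n.choose k : ℕ) : ℝ) * (belP (k+1) r * belP (n-k) s)
          + C ((n.choose k : ℕ) : ℝ) * (belP k r * belP (n+1-k) s) := by
      intro k hk
      rw [Finset.mem_range] at hk
      have hnk : n + 1 - k = (n - k) + 1 := by omega
      rw [hnk, belP_succ, belP_succ, derivative_C_mul, derivative_mul, derivative_add]
      ring
    have step1 : (∑ k ∈ range (n+1), C ((n.choose k : ℕ) : ℝ) * (belP k r * belP (n-k) s)).derivative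
          + (∑ k ∈ range (n+1), C ((n.choose k : ℕ) : ℝ) * (belP k r * belP (n-k) s)) * (r+s).derivative
        = ∑ k ∈ range (n+1), C ((n.choose k : ℕ) : ℝ) * (belP (k+1) r * belP (n-k) s)
          + ∑ k ∈ range (n+1), C ((n.choose k : ℕ) : ℝ) * (belP k r * belP (n+1-k) s) := by
      rw [derivative_sum, Finset.sum_mul, ← Finset.sum_add_distrib, ← Finset.sum_add_distrib]
      exact Finset.sum_congr rfl key
    rw [step1]
    -- now identify with the (n+1)-binomial sum
    rw [Finset.sum_range_succ' (fun k => C (((n+1).choose k : ℕ) : ℝ) * (belP k r * belP (n+1-k) s)) (n+1)]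
    have h2 : ∀ i ∈ range (n+1),
        C (((n+1).choose (i+1) : ℕ) : ℝ) * (belP (i+1) r * belP (n+1-(i+1)) s)
        = C ((n.choose i : ℕ) : ℝ) * (belP (i+1) r * belP (n-i) s)
          + C ((n.choose (i+1) : ℕ) : ℝ) * (belP (i+1) r * belP (n-i) s) := by
      intro i _
      have : n + 1 - (i+1) = n - i := by omega
      rw [this, Nat.choose_succ_succ]
      push_cast
      rw [C_add]
      ring
    rw [Finset.sum_congr rfl h2, Finset.sum_add_distrib]
    -- second sums match up to reindex
    have h3 : ∑ i ∈ range (n+1), C ((n.choose (i+1) : ℕ) : ℝ) * (belP (i+1) r * belP (n-i) s)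
          + C (((n+1).choose 0 : ℕ) : ℝ) * (belP 0 r * belP (n+1-0) s)
        = ∑ k ∈ range (n+1), C ((n.choose k : ℕ) : ℝ) * (belP k r * belP (n+1-k) s) := by
      rw [Finset.sum_range_succ' (fun k => C ((n.choose k : ℕ) : ℝ) * (belP k r * belP (n+1-k) s)) n]
      congr 1
      · rw [Finset.sum_range_succ]
        have : ∀ i ∈ range n, C ((n.choose (i+1) : ℕ) : ℝ) * (belP (i+1) r * belP (n-i) s)
            = C ((n.choose (i+1) : ℕ) : ℝ) * (belP (i+1) r * belP (n+1-(i+1)) s) := by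
          intro i _
          have hii : n + 1 - (i+1) = n - i := by omega
          rw [hii]
        rw [Finset.sum_congr rfl this, Nat.choose_succ_self]
        simp
      · simp
    rw [← h3]
    ring

lemma iteratedDeriv_exp_poly (r : Polynomial ℝ) (j : ℕ) :
    iteratedDeriv j (fun z => Real.exp (r.eval z)) =
      fun z => (belP j r).eval z * Real.exp (r.eval z) := by
  induction j with
  | zero => funext z; simp [belP]
  | succ j ih =>
    rw [iteratedDeriv_succ, ih]
    funext z
    have h : HasDerivAt (fun z : ℝ => (belP j r).eval z * Real.exp (r.eval z))
        ((belP j r).derivative.eval z * Real.exp (r.eval z) +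
          (belP j r).eval z * (Real.exp (r.eval z) * r.derivative.eval z)) z :=
      ((belP j r).hasDerivAt z).mul ((r.hasDerivAt z).exp)
    rw [h.deriv, belP]
    simp only [eval_add, eval_mul]
    ring

noncomputable def polOf (N : ℕ) (x : ℕ → ℝ) : Polynomial ℝ :=
  ∑ i ∈ range N, Polynomial.monomial (i+1) (x (i+1) / ((i+1).factorial : ℝ))

lemma eval_polOf (N : ℕ) (x : ℕ → ℝ) (z : ℝ) :
    (polOf N x).eval z = ∑ i ∈ range N, x (i+1) * z^(i+1) / ((i+1).factorial : ℝ) := by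
  rw [polOf, eval_finset_sum]
  exact Finset.sum_congr rfl fun i _ => by rw [eval_monomial]; ring

lemma bell_eq_belP (n : ℕ) (x : ℕ → ℝ) : bell n x = (belP n (polOf n x)).eval 0 := by
  unfold bell
  have h : (fun z : ℝ => Real.exp (∑ i ∈ Finset.range n, x (i + 1) * z ^ (i + 1) / ((i + 1).factorial : ℝ)))
      = fun z => Real.exp ((polOf n x).eval z) := funext fun z => by rw [eval_polOf]
  have h0 : (polOf n x).eval 0 = 0 := by
    rw [eval_polOf]
    exact Finset.sum_eq_zero fun i _ => by simp
  rw [h, iteratedDeriv_exp_poly]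
  simp [h0]

lemma belP_polOf_eval (x : ℕ → ℝ) (k N : ℕ) (hkN : k ≤ N) :
    (belP k (polOf N x)).eval 0 = bell k x := by
  have split : polOf N x = polOf k x
      + ∑ i ∈ Finset.Ico k N, Polynomial.monomial (i+1) (x (i+1) / ((i+1).factorial : ℝ)) := by
    rw [polOf, polOf, Finset.range_eq_Ico,
      ← Finset.sum_Ico_consecutive _ (Nat.zero_le k) hkN]
    rw [Finset.range_eq_Ico]
  set tl := ∑ i ∈ Finset.Ico k N, Polynomial.monomial (i+1) (x (i+1) / ((i+1).factorial : ℝ)) with htl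
  have htl_coeff : ∀ i, i < k + 1 → tl.coeff i = 0 := by
    intro i hi
    rw [htl, finset_sum_coeff]
    refine Finset.sum_eq_zero fun j hj => ?_
    rw [Finset.mem_Ico] at hj
    rw [coeff_monomial, if_neg (by omega)]
  rw [split, belP_add, eval_finset_sum, Finset.sum_range_succ]
  have hzero : ∀ j ∈ range k,
      (C ((k.choose j : ℕ) : ℝ) * (belP j (polOf k x) * belP (k-j) tl)).eval 0 = 0 := by
    intro j hj
    rw [Finset.mem_range] at hj
    rw [eval_mul, eval_mul, belP_eval_zero_of_lt tl (k+1) (k-j) htl_coeff (by omega),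
      if_neg (by omega)]
    ring
  rw [Finset.sum_eq_zero hzero, zero_add, Nat.sub_self, Nat.choose_self]
  have : belP 0 tl = 1 := rfl
  rw [this, eval_mul, eval_mul, eval_C, eval_one, bell_eq_belP]
  push_cast
  ring

lemma bell_zero (x : ℕ → ℝ) : bell 0 x = 1 := by
  unfold bell
  rw [iteratedDeriv_zero]
  simp

lemma bell_congr (n : ℕ) {x y : ℕ → ℝ} (h : ∀ i, 1 ≤ i → i ≤ n → x i = y i) :
    bell n x = bell n y := by
  unfold bell
  congr 1
  funext z
  congr 1
  exact Finset.sum_congr rfl fun i hi => by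
    rw [Finset.mem_range] at hi
    rw [h (i+1) (by omega) (by omega)]

lemma bell_add (a b : ℕ → ℝ) (n : ℕ) :
    bell n (fun i => a i + b i)
      = ∑ k ∈ range (n+1), ((n.choose k : ℕ) : ℝ) * (bell k a * bell (n-k) b) := by
  rw [bell_eq_belP]
  have hsplit : polOf n (fun i => a i + b i) = polOf n a + polOf n b := by
    rw [polOf, polOf, polOf, ← Finset.sum_add_distrib]
    exact Finset.sum_congr rfl fun i _ => by rw [← map_add, add_div]
  rw [hsplit, belP_add, eval_finset_sum]
  exact Finset.sum_congr rfl fun k hk => by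
    rw [Finset.mem_range] at hk
    rw [eval_mul, eval_mul, eval_C, belP_polOf_eval a k n (by omega),
      belP_polOf_eval b (n-k) n (by omega)]

lemma bell_update (n : ℕ) (x : ℕ → ℝ) (hn : 1 ≤ n) :
    bell n x = x n + bell n (fun i => if i = n then 0 else x i) := by
  obtain ⟨m, rfl⟩ : ∃ m, n = m + 1 := ⟨n - 1, by omega⟩
  set x' : ℕ → ℝ := fun i => if i = m + 1 then 0 else x i with hx'
  have hsplit : polOf (m+1) x = polOf (m+1) x'
      + Polynomial.monomial (m+1) (x (m+1) / ((m+1).factorial : ℝ)) := by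
    have h1 : ∀ i ∈ range m,
        Polynomial.monomial (i+1) (x (i+1) / ((i+1).factorial : ℝ))
        = Polynomial.monomial (i+1) (x' (i+1) / ((i+1).factorial : ℝ)) := by
      intro i hi
      rw [Finset.mem_range] at hi
      have hxx : x' (i+1) = x (i+1) := by rw [hx']; exact if_neg (by omega)
      rw [hxx]
    have hz : Polynomial.monomial (m+1) (x' (m+1) / ((m+1).factorial : ℝ)) = 0 := by
      have hxx : x' (m+1) = 0 := by rw [hx']; simp
      rw [hxx, zero_div, Polynomial.monomial_zero_right]
    rw [polOf, polOf, Finset.sum_range_succ, Finset.sum_range_succ, hz, add_zero,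
      Finset.sum_congr rfl h1]
  set s := Polynomial.monomial (m+1) (x (m+1) / ((m+1).factorial : ℝ)) with hs
  have hs_coeff : ∀ i, i < m + 1 → s.coeff i = 0 := by
    intro i hi
    rw [hs, coeff_monomial, if_neg (by omega)]
  rw [bell_eq_belP, hsplit, belP_add, eval_finset_sum, Finset.sum_range_succ,
    Finset.sum_range_succ']
  have hzero : ∀ j ∈ range m,
      (C (((m+1).choose (j+1) : ℕ) : ℝ) * (belP (j+1) (polOf (m+1) x') * belP (m+1-(j+1)) s)).eval 0
        = 0 := by
    intro j hj
    rw [Finset.mem_range] at hj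
    rw [eval_mul, eval_mul, belP_eval_zero_of_lt s (m+1) (m+1-(j+1)) hs_coeff (by omega),
      if_neg (by omega)]
    ring
  rw [Finset.sum_eq_zero hzero, zero_add]
  have hfirst : (C (((m+1).choose 0 : ℕ) : ℝ) * (belP 0 (polOf (m+1) x') * belP (m+1-0) s)).eval 0
      = x (m+1) := by
    have h00 : belP 0 (polOf (m+1) x') = 1 := rfl
    rw [h00, Nat.choose_zero_right, Nat.sub_zero, eval_mul, eval_mul, eval_C, eval_one,
      belP_eval_zero_top s (m+1) hs_coeff (by omega), hs, coeff_monomial, if_pos rfl]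
    field_simp
    norm_num
  have hlast : (C (((m+1).choose (m+1) : ℕ) : ℝ) * (belP (m+1) (polOf (m+1) x') * belP (m+1-(m+1)) s)).eval 0
      = bell (m+1) x' := by
    have h00 : belP (m+1-(m+1)) s = 1 := by rw [Nat.sub_self]; rfl
    rw [h00, Nat.choose_self, eval_mul, eval_mul, eval_C, eval_one,
      belP_polOf_eval x' (m+1) (m+1) le_rfl]
    push_cast
    try ring
  rw [hfirst, hlast]
  try ring

lemma bell_one (x : ℕ → ℝ) : bell 1 x = x 1 := by
  rw [bell_update 1 x le_rfl]
  have h : bell 1 (fun i => if i = 1 then 0 else x i) = 0 := by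
    rw [bell_eq_belP]
    have h0 : ∀ i, i < 2 → (polOf 1 fun i => if i = 1 then 0 else x i).coeff i = 0 := by
      intro i hi
      rw [polOf]
      simp
    rw [belP_eval_zero_of_lt _ 2 1 h0 (by omega), if_neg (by omega)]
  rw [h, add_zero]

lemma bell_of_zero (n : ℕ) : bell n (fun _ => 0) = if n = 0 then 1 else 0 := by
  rw [bell_eq_belP]
  have h0 : ∀ i, i < n + 1 → (polOf n fun _ => 0).coeff i = 0 := by
    intro i hi
    rw [polOf]
    have : ∀ j ∈ range n, Polynomial.monomial (j+1) ((0:ℝ) / ((j+1).factorial : ℝ))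
        = 0 := fun j _ => by rw [zero_div, Polynomial.monomial_zero_right]
    rw [Finset.sum_congr rfl this, Finset.sum_const, smul_zero, coeff_zero]
  exact belP_eval_zero_of_lt _ (n+1) n h0 (by omega)


/-- The `n`-th conditional cumulant of `X` given the sub-σ-algebra `m`, defined recursively
by `X⁽¹⁾ = E[X|m]` and `X⁽ⁿ⁾ = E[Xⁿ|m] − B_n(X⁽¹⁾,…,X⁽ⁿ⁻¹⁾,0)` for `n ≥ 2`. -/
noncomputable def condCumulant {Ω : Type*} {m0 : MeasurableSpace Ω} (μ : Measure Ω)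
    (m : MeasurableSpace Ω) (X : Ω → ℝ) : ℕ → Ω → ℝ
  | 0 => fun _ => 1
  | 1 => μ[X|m]
  | n + 2 => μ[(fun ω => X ω ^ (n + 2))|m] - fun ω =>
      bell (n + 2) fun i => if h : 1 ≤ i ∧ i ≤ n + 1 then condCumulant μ m X i ω else 0
termination_by n => n
decreasing_by omega

lemma bell_condCumulant {Ω : Type*} {m0 : MeasurableSpace Ω} (μ : Measure Ω)
    (m : MeasurableSpace Ω) (X : Ω → ℝ) (j : ℕ) (hj : 1 ≤ j) (ω : Ω) :
    bell j (fun i => condCumulant μ m X i ω) = (μ[(fun ω' => X ω' ^ j)|m]) ω := by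
  match j, hj with
  | 1, _ =>
    rw [bell_one]
    have h1 : condCumulant μ m X 1 = μ[X|m] := by rw [condCumulant]
    rw [h1]
    have h2 : (fun ω' => X ω' ^ 1) = X := funext fun ω' => pow_one _
    rw [h2]
  | (k+2), _ =>
    rw [bell_update (k+2) _ (by omega)]
    have hrec : condCumulant μ m X (k+2)
        = μ[(fun ω' => X ω' ^ (k + 2))|m] - fun ω' =>
            bell (k+2) fun i => if h : 1 ≤ i ∧ i ≤ k + 1 then condCumulant μ m X i ω' else 0 := by
      rw [condCumulant]
    have hcongr : bell (k+2) (fun i => if i = k+2 then 0 else condCumulant μ m X i ω)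
        = bell (k+2) (fun i => if h : 1 ≤ i ∧ i ≤ k + 1 then condCumulant μ m X i ω else 0) := by
      apply bell_congr
      intro i h1 h2
      by_cases hik : i = k+2
      · rw [if_pos hik, dif_neg (by omega)]
      · rw [if_neg hik, dif_pos ⟨h1, by omega⟩]
    rw [hcongr, hrec]
    simp only [Pi.sub_apply]
    ring

section Jensen
variable {Ω : Type*} {m0 : MeasurableSpace Ω} {μ : Measure Ω}

lemma abs_sign_le (c : ℝ) : |Real.sign c| ≤ 1 := by
  rcases Real.sign_apply_eq c with h | h | h <;> rw [h] <;> norm_num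

lemma abs_rpow_tangent_le (q : ℝ) (hq : 1 < q) (c x : ℝ) :
    q * (Real.sign c * |c| ^ (q-1)) * x - (q-1) * |c| ^ q ≤ |x| ^ q := by
  have hq0 : (0:ℝ) < q := by linarith
  have hconj : q.HolderConjugate (q/(q-1)) := Real.HolderConjugate.conjExponent hq
  have hy : |x| * |c|^(q-1) ≤ |x|^q / q + (|c|^(q-1))^(q/(q-1)) / (q/(q-1)) :=
    Real.young_inequality_of_nonneg (abs_nonneg x) (Real.rpow_nonneg (abs_nonneg c) _) hconj
  have h4 : (|c|^(q-1))^(q/(q-1)) = |c|^q := by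
    rw [← Real.rpow_mul (abs_nonneg c)]
    congr 1
    field_simp
    rw [div_self (by linarith : q - 1 ≠ 0)]
  rw [h4] at hy
  have h5 : |x|^q / q + |c|^q / (q/(q-1)) = |x|^q / q + |c|^q * (q-1) / q := by
    congr 1
    rw [div_div_eq_mul_div]
  rw [h5] at hy
  have h1 : Real.sign c * x ≤ |x| := by
    calc Real.sign c * x ≤ |Real.sign c * x| := le_abs_self _
    _ = |Real.sign c| * |x| := abs_mul _ _
    _ ≤ 1 * |x| := by
        exact mul_le_mul_of_nonneg_right (abs_sign_le c) (abs_nonneg x)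
    _ = |x| := one_mul _
  have h2 : q * (Real.sign c * |c| ^ (q-1)) * x = q * ((Real.sign c * x) * |c|^(q-1)) := by ring
  have h3 : q * ((Real.sign c * x) * |c|^(q-1)) ≤ q * (|x| * |c|^(q-1)) :=
    mul_le_mul_of_nonneg_left
      (mul_le_mul_of_nonneg_right h1 (Real.rpow_nonneg (abs_nonneg c) _)) hq0.le
  have h6 := mul_le_mul_of_nonneg_left hy hq0.le
  have h7 : q * (|x|^q / q + |c|^q * (q-1) / q) = |x|^q + (q-1) * |c|^q := by
    field_simp
  rw [h7] at h6
  linarith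

lemma sign_mul_self_abs (x : ℝ) : Real.sign x * x = |x| := by
  rcases lt_trichotomy x 0 with h | h | h
  · rw [Real.sign_of_neg h, abs_of_neg h]; ring
  · simp [h]
  · rw [Real.sign_of_pos h, abs_of_pos h]; ring

lemma condexp_abs_rpow_le {m : MeasurableSpace Ω} (hm : m ≤ m0) [IsProbabilityMeasure μ]
    (q : ℝ) (hq : 1 < q) (f : Ω → ℝ) (hf : Integrable f μ)
    (hfq : Integrable (fun ω => |f ω| ^ q) μ) :
    ∀ᵐ ω ∂μ, |(μ[f|m]) ω| ^ q ≤ (μ[(fun ω => |f ω| ^ q)|m]) ω := by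
  have hline : ∀ c : ℝ,
      (fun ω => q * (Real.sign c * |c| ^ (q-1)) * (μ[f|m]) ω - (q-1) * |c| ^ q)
        ≤ᵐ[μ] μ[(fun ω => |f ω| ^ q)|m] := by
    intro c
    set a := q * (Real.sign c * |c| ^ (q-1)) with ha
    have hint : Integrable (fun ω => a * f ω - (q-1) * |c| ^ q) μ :=
      (hf.const_mul a).sub (integrable_const _)
    have h4 : (fun ω => a * f ω - (q-1)*|c|^q) ≤ᵐ[μ] (fun ω => |f ω| ^ q) :=
      Eventually.of_forall fun ω => abs_rpow_tangent_le q hq c (f ω)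
    have hmono := condExp_mono (m := m) hint hfq h4
    have h1 : μ[(fun ω => a * f ω - (q-1) * |c| ^ q)|m]
        =ᵐ[μ] fun ω => a * (μ[f|m]) ω - (q-1) * |c| ^ q := by
      have h2 := condExp_sub (m := m) (hf.const_mul a) (integrable_const ((q-1) * |c| ^ q)) (μ := μ)
      have h3 : μ[(fun ω => a * f ω)|m] =ᵐ[μ] fun ω => a * (μ[f|m]) ω := by
        have := condExp_smul (m := m) (m₀ := m0) (μ := μ) a f
        have heq : a • f = fun ω => a * f ω := by funext ω; simp [smul_eq_mul]
        rw [heq] at this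
        refine this.trans (Eventually.of_forall fun ω => ?_)
        simp [smul_eq_mul]
      have h5 : μ[(fun ω => (q-1) * |c| ^ q)|m] =ᵐ[μ] fun _ => (q-1) * |c| ^ q :=
        Filter.EventuallyEq.of_eq (condExp_const hm _)
      calc μ[(fun ω => a * f ω - (q-1) * |c| ^ q)|m]
          =ᵐ[μ] μ[(fun ω => a * f ω)|m] - μ[(fun ω => (q-1) * |c| ^ q)|m] := by
            have : (fun ω => a * f ω - (q-1) * |c| ^ q)
                = (fun ω => a * f ω) - (fun ω => (q-1) * |c| ^ q) := rfl
            rw [this]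
            exact h2
        _ =ᵐ[μ] fun ω => a * (μ[f|m]) ω - (q-1) * |c| ^ q := by
            filter_upwards [h3, h5] with ω hω h5ω
            simp only [Pi.sub_apply, hω, h5ω]
    filter_upwards [hmono, h1] with ω hω h1ω
    rw [← h1ω]
    exact hω
  have hQ : ∀ᵐ ω ∂μ, ∀ c : ℚ,
      q * (Real.sign (c:ℝ) * |(c:ℝ)| ^ (q-1)) * (μ[f|m]) ω - (q-1) * |(c:ℝ)| ^ q
        ≤ (μ[(fun ω => |f ω| ^ q)|m]) ω := ae_all_iff.2 fun c => hline (c:ℝ)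
  have hnn : 0 ≤ᵐ[μ] μ[(fun ω => |f ω| ^ q)|m] :=
    condExp_nonneg (Eventually.of_forall fun ω => Real.rpow_nonneg (abs_nonneg _) _)
  filter_upwards [hQ, hnn] with ω hω hnnω
  set x := (μ[f|m]) ω with hx
  set E := (μ[(fun ω => |f ω| ^ q)|m]) ω with hE
  rcases eq_or_ne x 0 with hx0 | hx0
  · rw [hx0, abs_zero, Real.zero_rpow (by linarith : q ≠ 0)]
    exact hnnω
  · by_contra hcon
    push_neg at hcon
    set g : ℝ → ℝ := fun c => q * (Real.sign c * |c| ^ (q-1)) * x - (q-1) * |c| ^ q with hg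
    have hgx : g x = |x| ^ q := by
      rw [hg]
      simp only
      have h1 : Real.sign x * |x| ^ (q-1) * x = |x| ^ q := by
        have h2 : Real.sign x * |x| ^ (q-1) * x = (Real.sign x * x) * |x| ^ (q-1) := by ring
        rw [h2, sign_mul_self_abs, Real.rpow_sub (abs_pos.2 hx0), Real.rpow_one]
        field_simp
      calc q * (Real.sign x * |x| ^ (q-1)) * x - (q-1) * |x| ^ q
          = q * (Real.sign x * |x| ^ (q-1) * x) - (q-1) * |x| ^ q := by ring
        _ = q * |x| ^ q - (q-1) * |x| ^ q := by rw [h1]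
        _ = |x| ^ q := by ring
    have hcont : ContinuousAt g x := by
      have habs : Continuous fun c : ℝ => |c| ^ (q-1) :=
        continuous_abs.rpow_const (fun c => Or.inr (by linarith))
      have habs2 : Continuous fun c : ℝ => |c| ^ q :=
        continuous_abs.rpow_const (fun c => Or.inr (by linarith))
      have hsign : ∀ᶠ c in 𝓝 x, Real.sign c = Real.sign x := by
        rcases hx0.lt_or_gt with h | h
        · filter_upwards [Iio_mem_nhds h] with c hc
          rw [Real.sign_of_neg hc, Real.sign_of_neg h]
        · filter_upwards [Ioi_mem_nhds h] with c hc
          rw [Real.sign_of_pos hc, Real.sign_of_pos h]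
      have hcont2 : ContinuousAt (fun c : ℝ => q * (Real.sign x * |c| ^ (q-1)) * x - (q-1) * |c| ^ q) x := by
        fun_prop
      refine hcont2.congr ?_
      filter_upwards [hsign] with c hc
      rw [hg]
      simp only [hc]
    have hev : ∀ᶠ c in 𝓝 x, E < g c := by
      have := hgx ▸ hcon
      exact hcont.eventually (eventually_gt_nhds this)
    rw [Metric.eventually_nhds_iff] at hev
    obtain ⟨ε, hε, hball⟩ := hev
    obtain ⟨c, hc⟩ := exists_rat_near x hε
    have h9 := hball (y := (c:ℝ)) (by rw [Real.dist_eq, abs_sub_comm]; exact hc)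
    simp only [hg] at h9
    exact absurd (hω c) (by linarith)

end Jensen

section MemLp
variable {Ω : Type*} {m0 : MeasurableSpace Ω} {μ : Measure Ω} [IsProbabilityMeasure μ]

lemma memLp_condexp {m : MeasurableSpace Ω} (hm : m ≤ m0)
    (q : ℝ) (hq : 1 ≤ q) (f : Ω → ℝ) (hf : MemLp f (ENNReal.ofReal q) μ) :
    MemLp (μ[f|m]) (ENNReal.ofReal q) μ := by
  rcases eq_or_lt_of_le hq with h1 | h1
  · rw [← h1, ENNReal.ofReal_one] at *
    exact memLp_one_iff_integrable.2 integrable_condExp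
  · have hq0 : (0:ℝ) < q := by linarith
    have hfi : Integrable f μ :=
      hf.integrable (by rw [← ENNReal.ofReal_one]; exact ENNReal.ofReal_le_ofReal hq)
    have hfq : Integrable (fun ω => |f ω| ^ q) μ := by
      have h2 := hf.integrable_norm_rpow (by simp [hq0]) ENNReal.ofReal_ne_top
      simpa [Real.norm_eq_abs, ENNReal.toReal_ofReal hq0.le] using h2
    have hle := condexp_abs_rpow_le hm q h1 f hfi hfq
    have hmeas : AEStronglyMeasurable[m0] (μ[f|m]) μ :=
      (stronglyMeasurable_condExp.mono hm).aestronglyMeasurable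
    have hInt : MemLp (fun ω => ‖(μ[f|m]) ω‖ ^ (ENNReal.ofReal q).toReal) 1 μ := by
      rw [ENNReal.toReal_ofReal hq0.le]
      refine memLp_one_iff_integrable.2 ?_
      refine Integrable.mono' (integrable_condExp (f := fun ω => |f ω| ^ q) (m := m)) ?_ ?_
      · exact ((hmeas.norm.aemeasurable.pow aemeasurable_const).aestronglyMeasurable)
      · filter_upwards [hle] with ω hω
        rw [Real.norm_eq_abs, Real.norm_eq_abs,
          abs_of_nonneg (Real.rpow_nonneg (abs_nonneg _) _)]
        exact hω
    have hne : ENNReal.ofReal q ≠ 0 := by simp [hq0]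
    have := (memLp_norm_rpow_iff (p := ENNReal.ofReal q) hmeas hne ENNReal.ofReal_ne_top).1
      (by rwa [ENNReal.div_self hne ENNReal.ofReal_ne_top])
    exact this

lemma memLp_pow (p : ℝ) (X : Ω → ℝ) (hX : MemLp X (ENNReal.ofReal p) μ)
    (j : ℕ) (hj : 1 ≤ j) :
    MemLp (fun ω => X ω ^ j) (ENNReal.ofReal p / j) μ := by
  have hjne : ((j : ℝ≥0∞)) ≠ 0 := by
    simp only [ne_eq, Nat.cast_eq_zero]
    omega
  have hjtop : ((j : ℝ≥0∞)) ≠ ⊤ := ENNReal.natCast_ne_top j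
  have h1 : MemLp (fun ω => ‖X ω‖ ^ ((j : ℝ≥0∞)).toReal) (ENNReal.ofReal p / j) μ :=
    (memLp_norm_rpow_iff hX.aestronglyMeasurable hjne hjtop).2 hX
  refine h1.of_le ?_ ?_
  · exact ((hX.aestronglyMeasurable.aemeasurable.pow aemeasurable_const).aestronglyMeasurable)
  · refine Eventually.of_forall fun ω => le_of_eq ?_
    rw [ENNReal.toReal_natCast, Real.norm_eq_abs, Real.norm_eq_abs, Real.norm_eq_abs,
      abs_of_nonneg (Real.rpow_nonneg (abs_nonneg _) _), Real.rpow_natCast, abs_pow]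

lemma ofReal_div_nat (p : ℝ) (j : ℕ) (hj : 1 ≤ j) :
    ENNReal.ofReal p / (j : ℝ≥0∞) = ENNReal.ofReal (p / j) := by
  rw [ENNReal.ofReal_div_of_pos (by exact_mod_cast hj : (0:ℝ) < j), ENNReal.ofReal_natCast]

lemma memLp_condexp_pow {m : MeasurableSpace Ω} (hm : m ≤ m0) (p : ℝ) (X : Ω → ℝ)
    (hX : MemLp X (ENNReal.ofReal p) μ) (j : ℕ) (hj : 1 ≤ j) (hjp : (j:ℝ) ≤ p) :
    MemLp (μ[(fun ω => X ω ^ j)|m]) (ENNReal.ofReal p / j) μ := by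
  have h1 := memLp_pow p X hX j hj
  rw [ofReal_div_nat p j hj] at h1 ⊢
  have hj0 : (0:ℝ) < j := by exact_mod_cast hj
  exact memLp_condexp hm (p/j) ((one_le_div hj0).2 hjp) _ h1

lemma memLp_mul {f g : Ω → ℝ} {P : ℝ≥0∞} (hP0 : P ≠ 0) (hPt : P ≠ ⊤) {a b : ℕ}
    (hf : MemLp f (P / a) μ) (hg : MemLp g (P / b) μ) :
    MemLp (fun ω => f ω * g ω) (P / (a + b : ℕ)) μ := by
  have hpqr : 1 / (P / ((a + b : ℕ) : ℝ≥0∞)) = 1 / (P / (a : ℝ≥0∞)) + 1 / (P / (b : ℝ≥0∞)) := by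
    rw [one_div, one_div, one_div,
      ENNReal.inv_div (Or.inl (ENNReal.natCast_ne_top _)) (Or.inr hP0),
      ENNReal.inv_div (Or.inl (ENNReal.natCast_ne_top _)) (Or.inr hP0),
      ENNReal.inv_div (Or.inl (ENNReal.natCast_ne_top _)) (Or.inr hP0),
      ENNReal.div_add_div_same, Nat.cast_add]
  have : ENNReal.HolderTriple (P / a) (P / b) (P / (a + b : ℕ)) :=
    ⟨by simpa only [one_div] using hpqr.symm⟩
  have h := hg.smul (φ := f) (r := P / (a + b : ℕ)) hf
  exact h

end MemLp

section Main
variable {Ω : Type*} {m0 : MeasurableSpace Ω} {μ : Measure Ω} [IsProbabilityMeasure μ]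

noncomputable def negCumBell (μ : Measure Ω) (m : MeasurableSpace Ω) (X : Ω → ℝ) (j : ℕ)
    (ω : Ω) : ℝ :=
  bell j (fun i => - condCumulant μ m X i ω)

noncomputable def incBell (μ : Measure Ω) (mt mu : MeasurableSpace Ω) (X : Ω → ℝ) (k : ℕ)
    (ω : Ω) : ℝ :=
  bell k (fun i => condCumulant μ mu X i ω - condCumulant μ mt X i ω)

lemma negCumBell_zero (m : MeasurableSpace Ω) (X : Ω → ℝ) :
    negCumBell μ m X 0 = fun _ => 1 := funext fun ω => bell_zero _

lemma incBell_zero (mt mu : MeasurableSpace Ω) (X : Ω → ℝ) :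
    incBell μ mt mu X 0 = fun _ => 1 := funext fun ω => bell_zero _

lemma negCumBell_rec (m : MeasurableSpace Ω) (X : Ω → ℝ) (j : ℕ) (hj : 1 ≤ j) :
    negCumBell μ m X j = fun ω => -∑ k ∈ range j, ((j.choose (k+1) : ℕ):ℝ)
      * ((μ[(fun ω' => X ω' ^ (k+1))|m]) ω * negCumBell μ m X (j-(k+1)) ω) := by
  funext ω
  have h0 : bell j (fun i => condCumulant μ m X i ω + (- condCumulant μ m X i ω)) = 0 := by
    have h1 : bell j (fun i => condCumulant μ m X i ω + (- condCumulant μ m X i ω))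
        = bell j (fun _ => 0) := bell_congr j (fun i _ _ => add_neg_cancel _)
    rw [h1, bell_of_zero, if_neg (by omega)]
  rw [bell_add, Finset.sum_range_succ'] at h0
  simp only [Nat.choose_zero_right, Nat.cast_one, bell_zero, one_mul, Nat.sub_zero] at h0
  have hterm : ∀ k ∈ range j, ((j.choose (k+1) : ℕ):ℝ)
      * (bell (k+1) (fun i => condCumulant μ m X i ω)
        * bell (j-(k+1)) (fun i => - condCumulant μ m X i ω))
      = ((j.choose (k+1):ℕ):ℝ)
        * ((μ[(fun ω' => X ω' ^ (k+1))|m]) ω * negCumBell μ m X (j-(k+1)) ω) := by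
    intro k _
    rw [bell_condCumulant μ m X (k+1) (by omega) ω]
    rfl
  rw [Finset.sum_congr rfl hterm] at h0
  have h2 : negCumBell μ m X j ω = bell j (fun i => - condCumulant μ m X i ω) := rfl
  rw [h2]
  linarith

lemma negCumBell_memLp {m : MeasurableSpace Ω} (hm : m ≤ m0) (p : ℝ) (hp : 2 ≤ p)
    (X : Ω → ℝ) (hX : MemLp X (ENNReal.ofReal p) μ) :
    ∀ j : ℕ, (j:ℝ) ≤ p → StronglyMeasurable[m] (negCumBell μ m X j)
      ∧ MemLp (negCumBell μ m X j) (ENNReal.ofReal p / j) μ := by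
  have hP0 : ENNReal.ofReal p ≠ 0 := by simp [ENNReal.ofReal_eq_zero]; linarith
  intro j
  induction j using Nat.strong_induction_on with
  | _ j ih =>
    intro hjp
    rcases Nat.eq_zero_or_pos j with rfl | hj
    · constructor
      · rw [negCumBell_zero]
        exact stronglyMeasurable_const
      · rw [negCumBell_zero]
        have : ((0:ℕ) : ℝ≥0∞) = 0 := Nat.cast_zero
        rw [this, ENNReal.div_zero hP0]
        exact memLp_top_const 1
    · rw [negCumBell_rec m X j hj]
      have hterm : ∀ k, k ∈ range j →
          StronglyMeasurable[m] (fun ω => ((j.choose (k+1) : ℕ):ℝ)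
            * ((μ[(fun ω' => X ω' ^ (k+1))|m]) ω * negCumBell μ m X (j-(k+1)) ω))
          ∧ MemLp (fun ω => ((j.choose (k+1) : ℕ):ℝ)
            * ((μ[(fun ω' => X ω' ^ (k+1))|m]) ω * negCumBell μ m X (j-(k+1)) ω))
              (ENNReal.ofReal p / j) μ := by
        intro k hk
        rw [Finset.mem_range] at hk
        have hih := ih (j-(k+1)) (by omega)
          (le_trans (by exact_mod_cast Nat.cast_le.2 (by omega : j-(k+1) ≤ j)) hjp)
        constructor
        · exact (stronglyMeasurable_condExp.mul hih.1).const_mul _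
        · have hmul := memLp_mul (μ := μ) hP0 ENNReal.ofReal_ne_top
            (memLp_condexp_pow hm p X hX (k+1) (by omega)
              (le_trans (by exact_mod_cast Nat.cast_le.2 (by omega : k+1 ≤ j)) hjp))
            hih.2
          have harith : (k+1) + (j - (k+1)) = j := by omega
          rw [harith] at hmul
          exact hmul.const_mul _
      constructor
      · have hEq : (fun ω => -∑ k ∈ range j, ((j.choose (k+1) : ℕ):ℝ)
            * ((μ[(fun ω' => X ω' ^ (k+1))|m]) ω * negCumBell μ m X (j-(k+1)) ω))
            = -∑ k ∈ range j, (fun ω => ((j.choose (k+1) : ℕ):ℝ)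
              * ((μ[(fun ω' => X ω' ^ (k+1))|m]) ω * negCumBell μ m X (j-(k+1)) ω)) := by
          funext ω
          simp [Finset.sum_apply]
        rw [hEq]
        exact (Finset.stronglyMeasurable_sum _ (fun k hk => (hterm k hk).1)).neg
      · exact (memLp_finsetSum _ (fun k hk => (hterm k hk).2)).neg

lemma incBell_eq (mt mu : MeasurableSpace Ω) (X : Ω → ℝ) (k : ℕ) :
    incBell μ mt mu X k = fun ω =>
      ∑ j ∈ range (k+1), ((k.choose j:ℕ):ℝ)
        * ((if j = 0 then 1 else (μ[(fun ω' => X ω' ^ j)|mu]) ω) * negCumBell μ mt X (k-j) ω) := by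
  funext ω
  have h1 : incBell μ mt mu X k ω
      = bell k (fun i => condCumulant μ mu X i ω + (- condCumulant μ mt X i ω)) := by
    have : (fun i => condCumulant μ mu X i ω - condCumulant μ mt X i ω)
        = (fun i => condCumulant μ mu X i ω + (- condCumulant μ mt X i ω)) :=
      funext fun i => sub_eq_add_neg _ _
    rw [incBell, this]
  rw [h1, bell_add]
  refine Finset.sum_congr rfl fun j hj => ?_
  rcases Nat.eq_zero_or_pos j with rfl | hjpos
  · rw [if_pos rfl, bell_zero]
    rfl
  · rw [if_neg (by omega), bell_condCumulant μ mu X j hjpos ω]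
    rfl

lemma incBell_memLp {mt mu : MeasurableSpace Ω} (hmt : mt ≤ m0) (hmu : mu ≤ m0)
    (p : ℝ) (hp : 2 ≤ p) (X : Ω → ℝ) (hX : MemLp X (ENNReal.ofReal p) μ)
    (k : ℕ) (hkp : (k:ℝ) ≤ p) :
    MemLp (incBell μ mt mu X k) (ENNReal.ofReal p / k) μ := by
  have hP0 : ENNReal.ofReal p ≠ 0 := by simp [ENNReal.ofReal_eq_zero]; linarith
  rw [incBell_eq]
  refine memLp_finsetSum _ (fun j hj => ?_)
  rw [Finset.mem_range] at hj
  have hfac : MemLp (fun ω => if j = 0 then (1:ℝ) else (μ[(fun ω' => X ω' ^ j)|mu]) ω)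
      (ENNReal.ofReal p / j) μ := by
    rcases Nat.eq_zero_or_pos j with rfl | hjpos
    · simp only [if_pos rfl]
      have : ((0:ℕ) : ℝ≥0∞) = 0 := Nat.cast_zero
      rw [this, ENNReal.div_zero hP0]
      exact memLp_top_const 1
    · have : (fun ω => if j = 0 then (1:ℝ) else (μ[(fun ω' => X ω' ^ j)|mu]) ω)
          = μ[(fun ω' => X ω' ^ j)|mu] := by
        funext ω; rw [if_neg (by omega)]
      rw [this]
      exact memLp_condexp_pow hmu p X hX j hjpos
        (le_trans (by exact_mod_cast Nat.cast_le.2 (by omega : j ≤ k)) hkp)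
  have hneg := (negCumBell_memLp hmt p hp X hX (k-j)
    (le_trans (by exact_mod_cast Nat.cast_le.2 (by omega : k-j ≤ k)) hkp)).2
  have hmul := memLp_mul (μ := μ) hP0 ENNReal.ofReal_ne_top hfac hneg
  have harith : j + (k - j) = k := by omega
  rw [harith] at hmul
  exact hmul.const_mul _

end Main

section Main2
variable {Ω : Type*} {m0 : MeasurableSpace Ω} {μ : Measure Ω} [IsProbabilityMeasure μ]

lemma condexp_incBell {mt mu : MeasurableSpace Ω} (hmt : mt ≤ m0) (hmu : mu ≤ m0)
    (hmtmu : mt ≤ mu) (p : ℝ) (hp : 2 ≤ p) (X : Ω → ℝ) (hX : MemLp X (ENNReal.ofReal p) μ) :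
    ∀ n : ℕ, 1 ≤ n → (n:ℝ) ≤ p → μ[incBell μ mt mu X n|mt] =ᵐ[μ] 0 := by
  have hP0 : ENNReal.ofReal p ≠ 0 := by simp [ENNReal.ofReal_eq_zero]; linarith
  have hone : ∀ j : ℕ, (j:ℝ) ≤ p → (1:ℝ≥0∞) ≤ ENNReal.ofReal p / j := by
    intro j hjp
    rcases Nat.eq_zero_or_pos j with rfl | hj
    · rw [Nat.cast_zero, ENNReal.div_zero hP0]
      exact le_top
    · rw [ENNReal.le_div_iff_mul_le
        (Or.inl (by exact_mod_cast hj.ne' : ((j:ℕ):ℝ≥0∞) ≠ 0))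
        (Or.inl (ENNReal.natCast_ne_top _)), one_mul, ← ENNReal.ofReal_natCast]
      exact ENNReal.ofReal_le_ofReal hjp
  intro n
  induction n using Nat.strong_induction_on with
  | _ n ih =>
    intro hn hnp
    have hle_p : ∀ k : ℕ, k ≤ n → (k:ℝ) ≤ p := fun k hk =>
      le_trans (by exact_mod_cast Nat.cast_le.2 hk) hnp
    have hYint : ∀ k : ℕ, k ≤ n → Integrable (incBell μ mt mu X k) μ := fun k hk =>
      (incBell_memLp hmt hmu p hp X hX k (hle_p k hk)).integrable (hone k (hle_p k hk))
    have hprod_int : ∀ k : ℕ, k < n →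
        Integrable (fun ω => (μ[(fun ω' => X ω' ^ (n-k))|mt]) ω * incBell μ mt mu X k ω) μ := by
      intro k hk
      have hmem := memLp_mul (μ := μ) hP0 ENNReal.ofReal_ne_top
        (memLp_condexp_pow hmt p X hX (n-k) (by omega) (hle_p (n-k) (by omega)))
        (incBell_memLp hmt hmu p hp X hX k (hle_p k (by omega)))
      have harith : (n-k) + k = n := by omega
      rw [harith] at hmem
      exact hmem.integrable (hone n hnp)
    have hterm_int : ∀ k ∈ range n, Integrable (fun ω => ((n.choose k : ℕ):ℝ)
        * ((μ[(fun ω' => X ω' ^ (n-k))|mt]) ω * incBell μ mt mu X k ω)) μ := by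
      intro k hk
      rw [Finset.mem_range] at hk
      exact (hprod_int k hk).const_mul _
    -- the main pointwise identity
    have hident : incBell μ mt mu X n = fun ω =>
        (μ[(fun ω' => X ω' ^ n)|mu]) ω
          - ∑ k ∈ range n, ((n.choose k : ℕ):ℝ)
              * ((μ[(fun ω' => X ω' ^ (n-k))|mt]) ω * incBell μ mt mu X k ω) := by
      funext ω
      have h1 : bell n (fun i => condCumulant μ mu X i ω)
          = bell n (fun i => (condCumulant μ mu X i ω - condCumulant μ mt X i ω)
              + condCumulant μ mt X i ω) :=
        bell_congr n (fun i _ _ => (sub_add_cancel _ _).symm)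
      rw [bell_add, Finset.sum_range_succ] at h1
      have h2 : bell n (fun i => condCumulant μ mu X i ω) = (μ[(fun ω' => X ω' ^ n)|mu]) ω :=
        bell_condCumulant μ mu X n hn ω
      have h3 : ∀ k ∈ range n, ((n.choose k : ℕ):ℝ)
          * (bell k (fun i => condCumulant μ mu X i ω - condCumulant μ mt X i ω)
            * bell (n-k) (fun i => condCumulant μ mt X i ω))
          = ((n.choose k : ℕ):ℝ)
            * ((μ[(fun ω' => X ω' ^ (n-k))|mt]) ω * incBell μ mt mu X k ω) := by
        intro k hk
        rw [Finset.mem_range] at hk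
        rw [bell_condCumulant μ mt X (n-k) (by omega) ω]
        have : incBell μ mt mu X k ω
            = bell k (fun i => condCumulant μ mu X i ω - condCumulant μ mt X i ω) := rfl
        rw [this]
        ring
      rw [Finset.sum_congr rfl h3] at h1
      rw [h2] at h1
      have h4 : bell (n-n) (fun i => condCumulant μ mt X i ω) = 1 := by
        rw [Nat.sub_self]
        exact bell_zero _
      rw [Nat.choose_self, h4] at h1
      have h5 : incBell μ mt mu X n ω
          = bell n (fun i => condCumulant μ mu X i ω - condCumulant μ mt X i ω) := rfl
      rw [h5]
      push_cast at h1
      linarith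
    -- conditional expectation computation
    have hsumfun : (fun ω => ∑ k ∈ range n, ((n.choose k : ℕ):ℝ)
          * ((μ[(fun ω' => X ω' ^ (n-k))|mt]) ω * incBell μ mt mu X k ω))
        = ∑ k ∈ range n, fun ω => ((n.choose k : ℕ):ℝ)
          * ((μ[(fun ω' => X ω' ^ (n-k))|mt]) ω * incBell μ mt mu X k ω) := by
      funext ω
      simp [Finset.sum_apply]
    have hsub : μ[incBell μ mt mu X n|mt]
        =ᵐ[μ] μ[μ[(fun ω' => X ω' ^ n)|mu]|mt]
          - μ[(fun ω => ∑ k ∈ range n, ((n.choose k : ℕ):ℝ)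
              * ((μ[(fun ω' => X ω' ^ (n-k))|mt]) ω * incBell μ mt mu X k ω))|mt] := by
      rw [hident]
      exact condExp_sub integrable_condExp
        (integrable_finset_sum _ hterm_int) mt
    have htower : μ[μ[(fun ω' => X ω' ^ n)|mu]|mt] =ᵐ[μ] μ[(fun ω' => X ω' ^ n)|mt] :=
      condExp_condExp_of_le hmtmu hmu
    have hsumce : μ[(fun ω => ∑ k ∈ range n, ((n.choose k : ℕ):ℝ)
          * ((μ[(fun ω' => X ω' ^ (n-k))|mt]) ω * incBell μ mt mu X k ω))|mt]
        =ᵐ[μ] ∑ k ∈ range n, μ[(fun ω => ((n.choose k : ℕ):ℝ)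
          * ((μ[(fun ω' => X ω' ^ (n-k))|mt]) ω * incBell μ mt mu X k ω))|mt] := by
      rw [hsumfun]
      exact condExp_finsetSum hterm_int mt
    have hterm_ae : ∀ k ∈ range n, μ[(fun ω => ((n.choose k : ℕ):ℝ)
          * ((μ[(fun ω' => X ω' ^ (n-k))|mt]) ω * incBell μ mt mu X k ω))|mt]
        =ᵐ[μ] fun ω => (if k = 0 then (μ[(fun ω' => X ω' ^ n)|mt]) ω else 0) := by
      intro k hk
      rw [Finset.mem_range] at hk
      rcases Nat.eq_zero_or_pos k with rfl | hkpos
      · have heq : (fun ω => ((n.choose 0 : ℕ):ℝ)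
            * ((μ[(fun ω' => X ω' ^ (n-0))|mt]) ω * incBell μ mt mu X 0 ω))
            = μ[(fun ω' => X ω' ^ n)|mt] := by
          funext ω
          rw [incBell_zero, Nat.choose_zero_right, Nat.sub_zero]
          simp
        rw [heq]
        refine EventuallyEq.trans (EventuallyEq.of_eq
          (condExp_of_stronglyMeasurable hmt stronglyMeasurable_condExp integrable_condExp)) ?_
        exact Eventually.of_forall fun ω => by simp
      · -- pull out the constant
        have hsmul : (fun ω => ((n.choose k : ℕ):ℝ)
            * ((μ[(fun ω' => X ω' ^ (n-k))|mt]) ω * incBell μ mt mu X k ω))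
            = ((n.choose k : ℕ):ℝ) • fun ω =>
              (μ[(fun ω' => X ω' ^ (n-k))|mt]) ω * incBell μ mt mu X k ω := by
          funext ω
          simp [smul_eq_mul]
        rw [hsmul]
        have h6 := condExp_smul (m := mt) (m₀ := m0) (μ := μ) ((n.choose k : ℕ):ℝ)
          (fun ω => (μ[(fun ω' => X ω' ^ (n-k))|mt]) ω * incBell μ mt mu X k ω)
        refine h6.trans ?_
        have h7 := condExp_mul_of_stronglyMeasurable_left (m := mt) (μ := μ)
          (stronglyMeasurable_condExp (f := fun ω' => X ω' ^ (n-k)))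
          (hprod_int k hk) (hYint k (by omega))
        have h8 := ih k hk (by omega) (hle_p k (by omega))
        filter_upwards [h7, h8] with ω h7ω h8ω
        simp only [Pi.smul_apply, smul_eq_mul]
        rw [if_neg (by omega)]
        have h9 : (μ[(fun ω => (μ[(fun ω' => X ω' ^ (n-k))|mt]) ω * incBell μ mt mu X k ω)|mt]) ω
            = (μ[(fun ω' => X ω' ^ (n-k))|mt]) ω * (μ[incBell μ mt mu X k|mt]) ω := by
          have := h7ω
          exact this
        rw [h9, h8ω]
        simp
    have hball := (ae_ball_iff (Finset.countable_toSet (range n))).2 hterm_ae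
    filter_upwards [hsub, htower, hsumce, hball] with ω hsubω htowerω hsumceω hballω
    rw [Pi.zero_apply, hsubω, Pi.sub_apply, htowerω, hsumceω, Finset.sum_apply]
    have h10 : ∑ k ∈ range n, (μ[(fun ω => ((n.choose k : ℕ):ℝ)
          * ((μ[(fun ω' => X ω' ^ (n-k))|mt]) ω * incBell μ mt mu X k ω))|mt]) ω
        = ∑ k ∈ range n, (if k = 0 then (μ[(fun ω' => X ω' ^ n)|mt]) ω else 0) :=
      Finset.sum_congr rfl fun k hk => hballω k hk
    rw [h10, Finset.sum_ite_eq' (range n) 0 (fun _ => (μ[(fun ω' => X ω' ^ n)|mt]) ω),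
      if_pos (Finset.mem_range.2 (by omega))]
    ring

end Main2


/-- Lemma 2: for `X ∈ L^p` on a filtered probability space satisfying the usual
conditions and a positive integer `n ≤ p`,
`E[B_n(𝕏⁽ⁿ⁾_u − 𝕏⁽ⁿ⁾_t) | ℱ_t] = 0` a.s. for all `0 ≤ t ≤ u ≤ T`, where
`𝕏⁽ⁿ⁾ = (X⁽¹⁾,…,X⁽ⁿ⁾)` are the conditional cumulant processes. -/
theorem condexp_bell_increment_eq_zero {Ω : Type*} {m0 : MeasurableSpace Ω}
    (μ : Measure Ω) [IsProbabilityMeasure μ] (T : ℝ) (hT : 0 < T) (F : Filtration ℝ m0)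
    -- the filtration satisfies the usual conditions: right-continuity and completeness
    (hRC : ∀ t : ℝ, 0 ≤ t → t < T → F t = ⨅ u ∈ Set.Ioc t T, F u)
    (hCompl : ∀ s : Set Ω, MeasurableSet s → μ s = 0 → MeasurableSet[F 0] s)
    (p : ℝ) (hp : 2 ≤ p) (X : Ω → ℝ) (hX : MemLp X (ENNReal.ofReal p) μ)
    (n : ℕ) (hn : 1 ≤ n) (hnp : (n : ℝ) ≤ p)
    (t u : ℝ) (ht : 0 ≤ t) (htu : t ≤ u) (hu : u ≤ T) :
    μ[(fun ω => bell n fun i =>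
        condCumulant μ (F u) X i ω - condCumulant μ (F t) X i ω)|F t] =ᵐ[μ] 0 :=
  condexp_incBell (F.le t) (F.le u) (F.mono htu) p hp X hX n hn hnp
end

section
/- Let (Ω,ℱ,P,{ℱ_t}_{t∈[0,T]}) be a filtered probability space and let M = {M_t}_{t∈[0,T]} be a martingale with E[|M_T|^3] < ∞. For each t, set M^{(2)}_t = E[(M_T − M_t)^2 | ℱ_t]. Then for any partition 0 = t_0 < t_1 < ⋯ < t_N = T, the realized skewness satisfies E[ ∑_{j=1}^{N} { (M_{t_j} − M_{t_{j−1}})^3 + 3 (M_{t_j} − M_{t_{j−1}}) (M^{(2)}_{t_j} − M^{(2)}_{t_{j−1}}) } ] = E[(M_T − M_0)^3]. -/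
open MeasureTheory Finset

open scoped ENNReal

lemma condexp_affine_jensen {Ω} {m m0 : MeasurableSpace Ω} {μ : Measure Ω}
    [IsProbabilityMeasure μ] (hm : m ≤ m0)
    {f : Ω → ℝ} (φ : ℝ → ℝ) (c d : ℚ → ℝ)
    (hf : Integrable f μ) (hφf : Integrable (fun ω => φ (f ω)) μ)
    (hmin : ∀ (r : ℚ) (x : ℝ), c r + d r * x ≤ φ x)
    (hsup : ∀ y : ℝ, ∀ ε : ℝ, 0 < ε → ∃ r : ℚ, φ y - ε ≤ c r + d r * y) :
    ∀ᵐ ω ∂μ, φ ((μ[f|m]) ω) ≤ (μ[(fun ω => φ (f ω))|m]) ω := by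
  have key : ∀ r : ℚ, ∀ᵐ ω ∂μ, c r + d r * (μ[f|m]) ω ≤ (μ[(fun ω => φ (f ω))|m]) ω := by
    intro r
    have hint : Integrable (fun ω => c r + d r * f ω) μ :=
      (integrable_const (c r)).add (hf.const_mul (d r))
    have h1 : μ[(fun ω => c r + d r * f ω)|m] ≤ᵐ[μ] μ[(fun ω => φ (f ω))|m] :=
      condExp_mono hint hφf (Filter.Eventually.of_forall fun ω => hmin r (f ω))
    have h2 : μ[(fun ω => c r + d r * f ω)|m] =ᵐ[μ] fun ω => c r + d r * (μ[f|m]) ω := by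
      have heq : (fun ω => c r + d r * f ω) = (fun _ => c r) + (d r) • f := by
        funext ω; simp [smul_eq_mul]
      rw [heq]
      refine (condExp_add (integrable_const (c r)) (hf.const_mul (d r)) m).trans ?_
      have hsmul : (d r) • f = fun x => d r * f x := by funext x; simp [smul_eq_mul]
      have h3 := condExp_smul (μ := μ) (m := m) (d r) f
      rw [hsmul] at h3
      have h4 : μ[(fun _ : Ω => c r)|m] =ᵐ[μ] fun _ => c r := by
        rw [condExp_const hm]
      filter_upwards [h3, h4] with ω h3ω h4ω
      simp only [Pi.add_apply, Pi.smul_apply, smul_eq_mul] at *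
      rw [h4ω, h3ω]
    filter_upwards [h1, h2] with ω h1ω h2ω
    rw [← h2ω]; exact h1ω
  rw [← ae_all_iff] at key
  filter_upwards [key] with ω hω
  refine le_of_forall_pos_le_add fun ε hε => ?_
  obtain ⟨r, hr⟩ := hsup ((μ[f|m]) ω) ε hε
  have := hω r
  linarith

lemma abs_cube_minorant (r x : ℝ) : -2 * |r| ^ 3 + (3 * r * |r|) * x ≤ |x| ^ 3 := by
  have h1 : 3 * r * |r| * x ≤ 3 * (|r| * |r|) * |x| := by
    have h0 : 3 * r * |r| * x ≤ abs (3 * r * |r| * x) := le_abs_self _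
    have h2 : abs (3 * r * |r| * x) = 3 * (|r| * |r|) * |x| := by
      rw [abs_mul, abs_mul, abs_mul, abs_abs, abs_of_nonneg (by norm_num : (0:ℝ) ≤ 3)]
      ring
    linarith
  nlinarith [sq_nonneg (|x| - |r|), abs_nonneg x, abs_nonneg r,
    mul_nonneg (mul_nonneg (sq_nonneg (|x| - |r|)) (abs_nonneg x)) (abs_nonneg r),
    mul_nonneg (sq_nonneg (|x| - |r|)) (abs_nonneg x),
    mul_nonneg (sq_nonneg (|x| - |r|)) (abs_nonneg r)]

lemma abs_cube_sup (y ε : ℝ) (hε : 0 < ε) :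
    ∃ r : ℚ, |y| ^ 3 - ε ≤ -2 * |(r:ℝ)| ^ 3 + (3 * (r:ℝ) * |(r:ℝ)|) * y := by
  have hcont : ContinuousAt (fun r : ℝ => -2 * |r| ^ 3 + (3 * r * |r|) * y) y := by
    fun_prop
  rw [Metric.continuousAt_iff] at hcont
  obtain ⟨δ, hδ, hball⟩ := hcont ε hε
  obtain ⟨q, hq1, hq2⟩ := exists_rat_btwn (show y - δ < y by linarith)
  have hdist : dist (q:ℝ) y < δ := by
    rw [Real.dist_eq, abs_lt]; constructor <;> linarith
  have := hball hdist
  rw [Real.dist_eq] at this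
  have hval : -2 * |y| ^ 3 + (3 * y * |y|) * y = |y| ^ 3 := by
    rcases le_or_gt 0 y with h | h
    · rw [abs_of_nonneg h]; ring
    · rw [abs_of_neg h]; ring
  rw [abs_lt] at this
  refine ⟨q, ?_⟩
  have h1 := this.1
  rw [hval] at h1
  linarith

lemma enn1' : (1:ℝ≥0∞)/1 = 1/3 + 1/(3/2) := by
  rw [div_one, one_div, one_div, ENNReal.inv_div (by norm_num) (by norm_num), ← one_div,
    ENNReal.div_add_div_same]
  norm_num
  exact (ENNReal.div_self (by norm_num) (by norm_num)).symm

lemma enn2' : (1:ℝ≥0∞)/(3/2) = 1/3 + 1/3 := by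
  rw [ENNReal.div_add_div_same, one_div, ENNReal.inv_div (by norm_num) (by norm_num)]
  norm_num

lemma enn3' : (1:ℝ≥0∞) ≤ 3/2 := by
  rw [ENNReal.le_div_iff_mul_le (by norm_num) (by norm_num)]
  norm_num

lemma enn4 : (3/2 : ℝ≥0∞) ≠ ⊤ := (ENNReal.div_lt_top (by norm_num) (by norm_num)).ne

lemma integrable_mul32 {Ω} {m0 : MeasurableSpace Ω} {μ : Measure Ω} [IsProbabilityMeasure μ]
    {f g : Ω → ℝ} (hf : MemLp f 3 μ) (hg : MemLp g (3/2) μ) :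
    Integrable (fun ω => f ω * g ω) μ := by
  haveI : ENNReal.HolderTriple 3 (3/2) 1 :=
    ⟨by have := enn1'; simp only [one_div] at this; exact this.symm⟩
  have h := hg.smul hf (r := 1)
  rw [← memLp_one_iff_integrable]
  exact h.ae_eq (by filter_upwards with ω; simp [smul_eq_mul, mul_comm])

lemma memℒp_sq32 {Ω} {m0 : MeasurableSpace Ω} {μ : Measure Ω} [IsProbabilityMeasure μ]
    {f : Ω → ℝ} (hf : MemLp f 3 μ) : MemLp (fun ω => f ω ^ 2) (3/2) μ := by
  haveI : ENNReal.HolderTriple 3 3 (3/2) :=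
    ⟨by have := enn2'; simp only [one_div] at this; exact this.symm⟩
  have h := hf.smul hf (r := (3/2 : ℝ≥0∞))
  exact h.ae_eq (by filter_upwards with ω; simp [smul_eq_mul, sq])

lemma integrable_cube3 {Ω} {m0 : MeasurableSpace Ω} {μ : Measure Ω} [IsProbabilityMeasure μ]
    {f : Ω → ℝ} (hf : MemLp f 3 μ) : Integrable (fun ω => f ω ^ 3) μ := by
  have h := integrable_mul32 hf (memℒp_sq32 hf)
  exact h.congr (by filter_upwards with ω; ring)

lemma memℒp_condexp_three {Ω} {m m0 : MeasurableSpace Ω} {μ : Measure Ω}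
    [IsProbabilityMeasure μ] (hm : m ≤ m0) {f : Ω → ℝ} (hf : MemLp f 3 μ) :
    MemLp (μ[f|m]) 3 μ := by
  have hfi : Integrable f μ := hf.integrable (by norm_num)
  have hcube : Integrable (fun ω => |f ω| ^ 3) μ :=
    (integrable_cube3 hf).abs.congr (by filter_upwards with ω; rw [abs_pow])
  have hjen := condexp_affine_jensen hm (fun x => |x| ^ 3)
    (fun q => -2 * |(q:ℝ)| ^ 3) (fun q => 3 * (q:ℝ) * |(q:ℝ)|) hfi hcube
    (fun r x => abs_cube_minorant (r:ℝ) x) (fun y ε hε => abs_cube_sup y ε hε)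
  have hg_int : Integrable (fun ω => |(μ[f|m]) ω| ^ 3) μ := by
    refine Integrable.mono' (integrable_condExp (m := m) (f := fun ω => |f ω| ^ 3)) ?_ ?_
    · exact ((stronglyMeasurable_condExp.mono hm).measurable.abs.pow_const 3).aestronglyMeasurable
    · filter_upwards [hjen] with ω hω
      rw [Real.norm_eq_abs, abs_of_nonneg (by positivity)]
      exact hω
  have hgm : AEStronglyMeasurable (μ[f|m]) μ :=
    (stronglyMeasurable_condExp.mono hm).aestronglyMeasurable
  have h1 : MemLp (fun x => ‖(μ[f|m]) x‖ ^ (3:ℝ≥0∞).toReal) ((3:ℝ≥0∞)/3) μ := by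
    rw [show ((3:ℝ≥0∞)/3) = 1 from ENNReal.div_self (by norm_num) (by norm_num),
      memLp_one_iff_integrable]
    refine hg_int.congr ?_
    filter_upwards with ω
    rw [Real.norm_eq_abs, show ((3:ℝ≥0∞).toReal) = ((3:ℕ):ℝ) by norm_num,
      Real.rpow_natCast]
  exact (memLp_norm_rpow_iff hgm (by norm_num) (by norm_num)).mp h1

lemma sqrt_cube_minorant (q x : ℝ) :
    -(1/2) * Real.sqrt (max q 0) ^ 3 + ((3/2) * Real.sqrt (max q 0)) * x ≤ Real.sqrt x ^ 3 := by
  set β := Real.sqrt (max q 0) with hβ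
  have hβ0 : 0 ≤ β := Real.sqrt_nonneg _
  rcases le_or_gt x 0 with hx | hx
  · have hsx : Real.sqrt x = 0 := Real.sqrt_eq_zero_of_nonpos hx
    rw [hsx]
    have : (3/2) * β * x ≤ 0 := mul_nonpos_of_nonneg_of_nonpos (by positivity) hx
    nlinarith [pow_nonneg hβ0 3]
  · set α := Real.sqrt x with hα
    have hα0 : 0 ≤ α := Real.sqrt_nonneg _
    have hx2 : α ^ 2 = x := Real.sq_sqrt hx.le
    rw [← hx2]
    nlinarith [mul_nonneg (sq_nonneg (α - β)) (by positivity : (0:ℝ) ≤ 2 * α + β)]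

lemma sqrt_cube_sup (y ε : ℝ) (hε : 0 < ε) :
    ∃ r : ℚ, Real.sqrt y ^ 3 - ε ≤
      -(1/2) * Real.sqrt (max (r:ℝ) 0) ^ 3 + ((3/2) * Real.sqrt (max (r:ℝ) 0)) * y := by
  rcases le_or_gt y 0 with hy | hy
  · refine ⟨0, ?_⟩
    rw [Real.sqrt_eq_zero_of_nonpos hy]
    norm_num [Real.sqrt_zero]
    linarith
  · have hcont : ContinuousAt
        (fun r : ℝ => -(1/2) * Real.sqrt (max r 0) ^ 3 + ((3/2) * Real.sqrt (max r 0)) * y) y := by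
      fun_prop
    rw [Metric.continuousAt_iff] at hcont
    obtain ⟨δ, hδ, hball⟩ := hcont ε hε
    obtain ⟨q, hq1, hq2⟩ := exists_rat_btwn (show y - δ < y by linarith)
    have hdist : dist (q:ℝ) y < δ := by
      rw [Real.dist_eq, abs_lt]; constructor <;> linarith
    have hb := hball hdist
    rw [Real.dist_eq, abs_lt] at hb
    have hval : -(1/2) * Real.sqrt (max y 0) ^ 3 + ((3/2) * Real.sqrt (max y 0)) * y
        = Real.sqrt y ^ 3 := by
      rw [max_eq_left hy.le]
      have hx2 : Real.sqrt y ^ 2 = y := Real.sq_sqrt hy.le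
      nlinarith [Real.sqrt_nonneg y]
    refine ⟨q, ?_⟩
    have h1 := hb.1
    rw [hval] at h1
    linarith

lemma memℒp_condexp_sq32 {Ω} {m m0 : MeasurableSpace Ω} {μ : Measure Ω}
    [IsProbabilityMeasure μ] (hm : m ≤ m0) {h : Ω → ℝ} (hh : MemLp h 3 μ) :
    MemLp (μ[(fun ω => h ω ^ 2)|m]) (3/2) μ := by
  have hfi : Integrable (fun ω => h ω ^ 2) μ := (memℒp_sq32 hh).integrable enn3'
  have hφf : Integrable (fun ω => Real.sqrt (h ω ^ 2) ^ 3) μ := by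
    refine (integrable_cube3 hh).abs.congr ?_
    filter_upwards with ω
    rw [abs_pow, Real.sqrt_sq_eq_abs]
  have hjen := condexp_affine_jensen hm (fun x => Real.sqrt x ^ 3)
    (fun q => -(1/2) * Real.sqrt (max (q:ℝ) 0) ^ 3) (fun q => (3/2) * Real.sqrt (max (q:ℝ) 0))
    hfi hφf (fun r x => sqrt_cube_minorant (r:ℝ) x) (fun y ε hε => sqrt_cube_sup y ε hε)
  set g := μ[(fun ω => h ω ^ 2)|m] with hg
  have hg0 : 0 ≤ᵐ[μ] g := condExp_nonneg (Filter.Eventually.of_forall fun ω => sq_nonneg _)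
  have hg_int : Integrable (fun ω => Real.sqrt (g ω) ^ 3) μ := by
    refine Integrable.mono'
      (integrable_condExp (m := m) (f := fun ω => Real.sqrt (h ω ^ 2) ^ 3)) ?_ ?_
    · exact ((Real.continuous_sqrt.measurable.comp
        (stronglyMeasurable_condExp.mono hm).measurable).pow_const 3).aestronglyMeasurable
    · filter_upwards [hjen] with ω hω
      rw [Real.norm_eq_abs, abs_of_nonneg (by positivity)]
      exact hω
  have hgm : AEStronglyMeasurable g μ :=
    (stronglyMeasurable_condExp.mono hm).aestronglyMeasurable
  have h1 : MemLp (fun x => ‖g x‖ ^ ((3/2:ℝ≥0∞)).toReal) ((3/2:ℝ≥0∞)/(3/2)) μ := by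
    rw [show ((3/2:ℝ≥0∞)/(3/2)) = 1 from ENNReal.div_self (by norm_num) enn4,
      memLp_one_iff_integrable]
    refine hg_int.congr ?_
    filter_upwards [hg0] with ω hω
    have htr : ((3/2:ℝ≥0∞)).toReal = (3/2 : ℝ) := by
      rw [ENNReal.toReal_div]; norm_num
    rw [Real.norm_eq_abs, abs_of_nonneg hω, htr]
    rw [show Real.sqrt (g ω) ^ 3 = (Real.sqrt (g ω)) ^ (3:ℕ) from rfl,
      Real.sqrt_eq_rpow, ← Real.rpow_natCast (g ω ^ (1/2:ℝ)) 3, ← Real.rpow_mul hω]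
    norm_num
  exact (memLp_norm_rpow_iff hgm (by norm_num) enn4).mp h1


lemma realized_skewness_step {Ω : Type*} {m0 : MeasurableSpace Ω} (μ : Measure Ω)
    [IsProbabilityMeasure μ]
    (F : Filtration ℝ m0) (M : ℝ → Ω → ℝ) (hM : Martingale M F μ) {T a b : ℝ}
    (hab : a ≤ b) (hbT : b ≤ T) (hM3 : MemLp (M T) 3 μ) :
    Integrable (fun ω => (M b ω - M a ω) ^ 3 +
      3 * (M b ω - M a ω) *
        ((μ[(fun ω' => (M T ω' - M b ω') ^ 2)|F b]) ω -
         (μ[(fun ω' => (M T ω' - M a ω') ^ 2)|F a]) ω)) μ ∧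
    ∫ ω, ((M b ω - M a ω) ^ 3 +
      3 * (M b ω - M a ω) *
        ((μ[(fun ω' => (M T ω' - M b ω') ^ 2)|F b]) ω -
         (μ[(fun ω' => (M T ω' - M a ω') ^ 2)|F a]) ω)) ∂μ
      = (∫ ω, (M T ω - M a ω) ^ 3 ∂μ) - ∫ ω, (M T ω - M b ω) ^ 3 ∂μ := by
  have haT : a ≤ T := hab.trans hbT
  have hMa : μ[M T|F a] =ᵐ[μ] M a := hM.condExp_ae_eq haT
  have hMb : μ[M T|F b] =ᵐ[μ] M b := hM.condExp_ae_eq hbT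
  have hMa3 : MemLp (M a) 3 μ := (memℒp_condexp_three (F.le a) hM3).ae_eq hMa
  have hMb3 : MemLp (M b) 3 μ := (memℒp_condexp_three (F.le b) hM3).ae_eq hMb
  set Ga := μ[(fun ω' => (M T ω' - M a ω') ^ 2)|F a] with hGa_def
  set Gb := μ[(fun ω' => (M T ω' - M b ω') ^ 2)|F b] with hGb_def
  have hΔ3 : MemLp (fun ω => M b ω - M a ω) 3 μ := hMb3.sub hMa3
  have hXa3 : MemLp (fun ω => M T ω - M a ω) 3 μ := hM3.sub hMa3
  have hXb3 : MemLp (fun ω => M T ω - M b ω) 3 μ := hM3.sub hMb3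
  have hIΔ3 : Integrable (fun ω => (M b ω - M a ω) ^ 3) μ := integrable_cube3 hΔ3
  have hIKa : Integrable (fun ω => (M T ω - M a ω) ^ 3) μ := integrable_cube3 hXa3
  have hIKb : Integrable (fun ω => (M T ω - M b ω) ^ 3) μ := integrable_cube3 hXb3
  have hQb32 : MemLp (fun ω => (M T ω - M b ω) ^ 2) (3/2) μ := memℒp_sq32 hXb3
  have hQbInt : Integrable (fun ω => (M T ω - M b ω) ^ 2) μ := hQb32.integrable enn3'
  have hIΔQb : Integrable (fun ω => (M b ω - M a ω) * (M T ω - M b ω) ^ 2) μ :=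
    integrable_mul32 hΔ3 hQb32
  have hΔsm : StronglyMeasurable[F b] (fun ω => M b ω - M a ω) :=
    (hM.stronglyMeasurable b).sub ((hM.stronglyMeasurable a).mono (F.mono hab))
  -- pull-out at b
  have hpb : μ[(fun ω => M b ω - M a ω) * (fun ω' => (M T ω' - M b ω') ^ 2)|F b]
      =ᵐ[μ] (fun ω => M b ω - M a ω) * Gb :=
    condExp_mul_of_stronglyMeasurable_left hΔsm hIΔQb hQbInt
  have hIΔGb : Integrable (fun ω => (M b ω - M a ω) * Gb ω) μ :=
    (integrable_condExp).congr hpb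
  have hintΔGb : ∫ ω, (M b ω - M a ω) * Gb ω ∂μ
      = ∫ ω, (M b ω - M a ω) * (M T ω - M b ω) ^ 2 ∂μ := by
    have h1 := integral_congr_ae hpb
    have h2 := integral_condExp (μ := μ)
      (f := (fun ω => M b ω - M a ω) * (fun ω' => (M T ω' - M b ω') ^ 2)) (F.le b)
    rw [h1] at h2
    exact h2
  -- a-side
  have hGa32 : MemLp Ga (3/2) μ := memℒp_condexp_sq32 (F.le a) hXa3
  have hIΔGa : Integrable (fun ω => (M b ω - M a ω) * Ga ω) μ := integrable_mul32 hΔ3 hGa32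
  have hΔint : Integrable (fun ω => M b ω - M a ω) μ := (hM.integrable b).sub (hM.integrable a)
  have hcondΔ : μ[(fun ω => M b ω - M a ω)|F a] =ᵐ[μ] 0 := by
    have h1 := condExp_sub (μ := μ) (m := F a) (hM.integrable b) (hM.integrable a)
    have h2 : μ[M b|F a] =ᵐ[μ] M a := hM.condExp_ae_eq hab
    have h3 : μ[M a|F a] = M a :=
      condExp_of_stronglyMeasurable (F.le a) (hM.stronglyMeasurable a) (hM.integrable a)
    rw [h3] at h1
    filter_upwards [h1, h2] with ω h1ω h2ω
    show (μ[M b - M a|F a]) ω = (0 : Ω → ℝ) ω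
    rw [h1ω]
    simp only [Pi.sub_apply, Pi.zero_apply]
    rw [h2ω]
    ring
  have hIGaΔ : Integrable (fun ω => Ga ω * (M b ω - M a ω)) μ :=
    hIΔGa.congr (Filter.Eventually.of_forall fun ω => mul_comm _ _)
  have hpa : μ[Ga * (fun ω => M b ω - M a ω)|F a]
      =ᵐ[μ] Ga * μ[(fun ω => M b ω - M a ω)|F a] :=
    condExp_mul_of_stronglyMeasurable_left stronglyMeasurable_condExp hIGaΔ hΔint
  have h3 : μ[Ga * (fun ω => M b ω - M a ω)|F a] =ᵐ[μ] 0 := by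
    refine hpa.trans ?_
    filter_upwards [hcondΔ] with ω hω
    simp only [Pi.mul_apply, Pi.zero_apply] at *
    rw [hω]; ring
  have hintΔGa : ∫ ω, (M b ω - M a ω) * Ga ω ∂μ = 0 := by
    calc ∫ ω, (M b ω - M a ω) * Ga ω ∂μ
        = ∫ ω, Ga ω * (M b ω - M a ω) ∂μ := by simp_rw [mul_comm]
      _ = ∫ ω, (μ[Ga * (fun ω => M b ω - M a ω)|F a]) ω ∂μ :=
          (integral_condExp (F.le a)).symm
      _ = ∫ _ω, (0:ℝ) ∂μ := integral_congr_ae h3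
      _ = 0 := by simp
  -- cross term
  have hΔsq32 : MemLp (fun ω => (M b ω - M a ω) ^ 2) (3/2) μ := memℒp_sq32 hΔ3
  have hXbint : Integrable (fun ω => M T ω - M b ω) μ :=
    (hM.integrable T).sub (hM.integrable b)
  have hIcross : Integrable (fun ω => (M b ω - M a ω) ^ 2 * (M T ω - M b ω)) μ :=
    (integrable_mul32 hXb3 hΔsq32).congr
      (Filter.Eventually.of_forall fun ω => mul_comm _ _)
  have hΔ2sm : StronglyMeasurable[F b] (fun ω => (M b ω - M a ω) ^ 2) := hΔsm.pow 2
  have hcondXb : μ[(fun ω => M T ω - M b ω)|F b] =ᵐ[μ] 0 := by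
    have h1 := condExp_sub (μ := μ) (m := F b) (hM.integrable T) (hM.integrable b)
    have h3 : μ[M b|F b] = M b :=
      condExp_of_stronglyMeasurable (F.le b) (hM.stronglyMeasurable b) (hM.integrable b)
    rw [h3] at h1
    filter_upwards [h1, hMb] with ω h1ω h2ω
    show (μ[M T - M b|F b]) ω = (0 : Ω → ℝ) ω
    rw [h1ω]
    simp only [Pi.sub_apply, Pi.zero_apply]
    rw [h2ω]
    ring
  have hpc : μ[(fun ω => (M b ω - M a ω) ^ 2) * (fun ω => M T ω - M b ω)|F b]
      =ᵐ[μ] (fun ω => (M b ω - M a ω) ^ 2) * μ[(fun ω => M T ω - M b ω)|F b] :=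
    condExp_mul_of_stronglyMeasurable_left hΔ2sm hIcross hXbint
  have h3c : μ[(fun ω => (M b ω - M a ω) ^ 2) * (fun ω => M T ω - M b ω)|F b] =ᵐ[μ] 0 := by
    refine hpc.trans ?_
    filter_upwards [hcondXb] with ω hω
    simp only [Pi.mul_apply, Pi.zero_apply] at *
    rw [hω]; ring
  have hintcross : ∫ ω, (M b ω - M a ω) ^ 2 * (M T ω - M b ω) ∂μ = 0 := by
    calc ∫ ω, (M b ω - M a ω) ^ 2 * (M T ω - M b ω) ∂μ
        = ∫ ω, (μ[(fun ω => (M b ω - M a ω) ^ 2) * (fun ω => M T ω - M b ω)|F b]) ω ∂μ :=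
          (integral_condExp (F.le b)).symm
      _ = ∫ _ω, (0:ℝ) ∂μ := integral_congr_ae h3c
      _ = 0 := by simp
  -- assembly
  have hfun : (fun ω => (M b ω - M a ω) ^ 3 + 3 * (M b ω - M a ω) * (Gb ω - Ga ω))
      = fun ω => (M b ω - M a ω) ^ 3 +
          (3 * ((M b ω - M a ω) * Gb ω) - 3 * ((M b ω - M a ω) * Ga ω)) := by
    funext ω; ring
  have hIfull : Integrable (fun ω => (M b ω - M a ω) ^ 3 +
      (3 * ((M b ω - M a ω) * Gb ω) - 3 * ((M b ω - M a ω) * Ga ω))) μ :=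
    hIΔ3.add ((hIΔGb.const_mul 3).sub (hIΔGa.const_mul 3))
  have hI2 : Integrable (fun ω => 3 * ((M b ω - M a ω) * Gb ω)
      - 3 * ((M b ω - M a ω) * Ga ω)) μ :=
    (hIΔGb.const_mul 3).sub (hIΔGa.const_mul 3)
  have hIrest2 : Integrable (fun ω => 3 * ((M b ω - M a ω) ^ 2 * (M T ω - M b ω))
      + (M b ω - M a ω) ^ 3) μ := (hIcross.const_mul 3).add hIΔ3
  have hIrest : Integrable (fun ω => 3 * ((M b ω - M a ω) * (M T ω - M b ω) ^ 2)
      + (3 * ((M b ω - M a ω) ^ 2 * (M T ω - M b ω)) + (M b ω - M a ω) ^ 3)) μ :=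
    (hIΔQb.const_mul 3).add hIrest2
  have hexp : (fun ω => (M T ω - M a ω) ^ 3)
      = fun ω => (M T ω - M b ω) ^ 3 +
          (3 * ((M b ω - M a ω) * (M T ω - M b ω) ^ 2) +
            (3 * ((M b ω - M a ω) ^ 2 * (M T ω - M b ω)) + (M b ω - M a ω) ^ 3)) := by
    funext ω; ring
  have hKa : ∫ ω, (M T ω - M a ω) ^ 3 ∂μ
      = (∫ ω, (M T ω - M b ω) ^ 3 ∂μ) +
          (3 * (∫ ω, (M b ω - M a ω) * (M T ω - M b ω) ^ 2 ∂μ) +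
            (3 * (∫ ω, (M b ω - M a ω) ^ 2 * (M T ω - M b ω) ∂μ) +
              ∫ ω, (M b ω - M a ω) ^ 3 ∂μ)) := by
    calc ∫ ω, (M T ω - M a ω) ^ 3 ∂μ
        = ∫ ω, ((M T ω - M b ω) ^ 3 +
            (3 * ((M b ω - M a ω) * (M T ω - M b ω) ^ 2) +
              (3 * ((M b ω - M a ω) ^ 2 * (M T ω - M b ω)) + (M b ω - M a ω) ^ 3))) ∂μ := by
          rw [hexp]
      _ = (∫ ω, (M T ω - M b ω) ^ 3 ∂μ) +
            ∫ ω, (3 * ((M b ω - M a ω) * (M T ω - M b ω) ^ 2) +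
              (3 * ((M b ω - M a ω) ^ 2 * (M T ω - M b ω)) + (M b ω - M a ω) ^ 3)) ∂μ :=
          integral_add hIKb hIrest
      _ = (∫ ω, (M T ω - M b ω) ^ 3 ∂μ) +
            ((∫ ω, 3 * ((M b ω - M a ω) * (M T ω - M b ω) ^ 2) ∂μ) +
              ∫ ω, (3 * ((M b ω - M a ω) ^ 2 * (M T ω - M b ω)) + (M b ω - M a ω) ^ 3) ∂μ) := by
          congr 1
          exact integral_add (hIΔQb.const_mul 3) hIrest2
      _ = (∫ ω, (M T ω - M b ω) ^ 3 ∂μ) +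
            ((∫ ω, 3 * ((M b ω - M a ω) * (M T ω - M b ω) ^ 2) ∂μ) +
              ((∫ ω, 3 * ((M b ω - M a ω) ^ 2 * (M T ω - M b ω)) ∂μ) +
                ∫ ω, (M b ω - M a ω) ^ 3 ∂μ)) := by
          congr 2
          exact integral_add (hIcross.const_mul 3) hIΔ3
      _ = (∫ ω, (M T ω - M b ω) ^ 3 ∂μ) +
          (3 * (∫ ω, (M b ω - M a ω) * (M T ω - M b ω) ^ 2 ∂μ) +
            (3 * (∫ ω, (M b ω - M a ω) ^ 2 * (M T ω - M b ω) ∂μ) +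
              ∫ ω, (M b ω - M a ω) ^ 3 ∂μ)) := by
          rw [integral_const_mul 3 _, integral_const_mul 3 _]
  rw [hintcross] at hKa
  constructor
  · rw [hfun]; exact hIfull
  · rw [hfun]
    have hsplit : ∫ ω, ((M b ω - M a ω) ^ 3 +
        (3 * ((M b ω - M a ω) * Gb ω) - 3 * ((M b ω - M a ω) * Ga ω))) ∂μ
        = (∫ ω, (M b ω - M a ω) ^ 3 ∂μ) +
            (3 * (∫ ω, (M b ω - M a ω) * Gb ω ∂μ) -
              3 * (∫ ω, (M b ω - M a ω) * Ga ω ∂μ)) := by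
      calc ∫ ω, ((M b ω - M a ω) ^ 3 +
          (3 * ((M b ω - M a ω) * Gb ω) - 3 * ((M b ω - M a ω) * Ga ω))) ∂μ
          = (∫ ω, (M b ω - M a ω) ^ 3 ∂μ) +
              ∫ ω, (3 * ((M b ω - M a ω) * Gb ω) - 3 * ((M b ω - M a ω) * Ga ω)) ∂μ :=
            integral_add hIΔ3 hI2
        _ = (∫ ω, (M b ω - M a ω) ^ 3 ∂μ) +
              ((∫ ω, 3 * ((M b ω - M a ω) * Gb ω) ∂μ) -
                ∫ ω, 3 * ((M b ω - M a ω) * Ga ω) ∂μ) := by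
            congr 1
            exact integral_sub (hIΔGb.const_mul 3) (hIΔGa.const_mul 3)
        _ = (∫ ω, (M b ω - M a ω) ^ 3 ∂μ) +
              (3 * (∫ ω, (M b ω - M a ω) * Gb ω ∂μ) -
                3 * (∫ ω, (M b ω - M a ω) * Ga ω ∂μ)) := by
            rw [integral_const_mul 3 _, integral_const_mul 3 _]
    rw [hsplit, hintΔGb, hintΔGa]
    linarith

/-- Realized skewness (Neuberger): for an `L³` martingale `M` on `[0,T]` with
`M⁽²⁾_t = E[(M_T − M_t)² | ℱ_t]` and any partition `0 = t_0 < ⋯ < t_N = T`,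
`E[∑_j {(ΔM_j)³ + 3 ΔM_j ΔM⁽²⁾_j}] = E[(M_T − M_0)³]`. -/
theorem realized_skewness {Ω : Type*} {m0 : MeasurableSpace Ω}
    (μ : Measure Ω) [IsProbabilityMeasure μ] (T : ℝ) (hT : 0 < T)
    (F : Filtration ℝ m0) (M : ℝ → Ω → ℝ) (hM : Martingale M F μ)
    (hM3 : MemLp (M T) 3 μ)
    (N : ℕ) (hN : 1 ≤ N) (τ : ℕ → ℝ) (hτ0 : τ 0 = 0) (hτN : τ N = T)
    (hτ : ∀ j < N, τ j < τ (j + 1)) :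
    ∫ ω, (∑ j ∈ Finset.range N,
        ((M (τ (j + 1)) ω - M (τ j) ω) ^ 3 +
          3 * (M (τ (j + 1)) ω - M (τ j) ω) *
            ((μ[(fun ω' => (M T ω' - M (τ (j + 1)) ω') ^ 2)|F (τ (j + 1))]) ω -
              (μ[(fun ω' => (M T ω' - M (τ j) ω') ^ 2)|F (τ j)]) ω))) ∂μ
      = ∫ ω, (M T ω - M 0 ω) ^ 3 ∂μ := by
  have key : ∀ k j, j + k ≤ N → τ j ≤ τ (j + k) := by
    intro k
    induction k with
    | zero => intro j _; simp
    | succ n ih =>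
      intro j hj
      calc τ j ≤ τ (j + n) := ih j (by omega)
        _ ≤ τ (j + n + 1) := (hτ (j + n) (by omega)).le
  have hjT : ∀ j, j ≤ N → τ j ≤ T := by
    intro j hj
    have h := key (N - j) j (by omega)
    rwa [show j + (N - j) = N by omega, hτN] at h
  have hstep := fun (j : ℕ) (hj : j < N) =>
    realized_skewness_step μ F M hM (le_of_lt (hτ j hj)) (hjT (j + 1) hj) hM3
  rw [integral_finset_sum _ (fun j hj => (hstep j (Finset.mem_range.mp hj)).1)]
  rw [Finset.sum_congr rfl (fun j hj => (hstep j (Finset.mem_range.mp hj)).2)]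
  rw [Finset.sum_range_sub' (fun j => ∫ ω, (M T ω - M (τ j) ω) ^ 3 ∂μ) N]
  rw [hτ0, hτN]
  simp
end
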